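/- arXiv:1010.1600 — 3 statements merged into one kernel-verified Lean document; each statement's English description precedes it below -/
import Mathlib

section
/- A topometric space X admits a topometric compactification (an embedding as a topometric subspace of a compact topometric space) if and only if X is completely regular. -/
open scoped ENNReal NNReal
open Set

structure TopometricOn (X : Type*) [TopologicalSpace X] where
  d : X → X → ℝ≥0∞
  d_self : ∀ x, d x x = 0
  eq_of_d_eq_zero : ∀ x y, d x y = 0 → x = y
  d_symm : ∀ x y, d x y = d y x
  d_triangle : ∀ x y z, d x z ≤ d x y + d y z
  lsc : LowerSemicontinuous fun p : X × X => d p.1 p.2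
  refines : ∀ U : Set X, IsOpen U → ∀ x ∈ U, ∃ ε > (0 : ℝ≥0∞), ∀ y, d x y < ε → y ∈ U

namespace TopometricOn

variable {X : Type*} [TopologicalSpace X]

noncomputable def setD (T : TopometricOn X) (F G : Set X) : ℝ≥0∞ :=
  ⨅ x ∈ F, ⨅ y ∈ G, T.d x y

noncomputable def ptD (T : TopometricOn X) (x : X) (F : Set X) : ℝ≥0∞ :=
  ⨅ y ∈ F, T.d x y

def IsNormal (T : TopometricOn X) : Prop :=
  (∀ F G : Set X, IsClosed F → IsClosed G → 0 < T.setD F G →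
      ∃ U V : Set X, IsOpen U ∧ IsOpen V ∧ F ⊆ U ∧ G ⊆ V ∧ Disjoint U V) ∧
  (∀ F : Set X, IsClosed F → ∀ r : ℝ≥0∞, 0 < r → IsClosed {x | T.ptD x F ≤ r})


end TopometricOn

def TopometricOn.IsCompletelyRegular {X : Type*} [TopologicalSpace X]
    (T : TopometricOn X) : Prop :=
  (∀ F : Set X, IsClosed F → ∀ x ∉ F,
      ∃ f : X → ℂ, Continuous f ∧ (∀ a b, edist (f a) (f b) ≤ T.d a b) ∧
        ∃ t : ℂ, (∀ y ∈ F, f y = t) ∧ f x ≠ t) ∧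
  (∀ x y : X, T.d x y =
      ⨆ f : {f : X → ℂ // Continuous f ∧ ∀ a b, edist (f a) (f b) ≤ T.d a b},
        edist (f.1 x) (f.1 y))
open Topology Filter

namespace TopometricOn

variable {Z : Type*} [TopologicalSpace Z] (S : TopometricOn Z)

theorem d_pos {x y : Z} (h : x ≠ y) : 0 < S.d x y :=
  pos_iff_ne_zero.2 fun h0 => h (S.eq_of_d_eq_zero x y h0)

theorem lsc_slice (x : Z) : LowerSemicontinuous fun z => S.d x z :=
  by have := LowerSemicontinuous.comp S.lsc (Continuous.prodMk_right x); exact this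

include S in
theorem t2 : T2Space Z := by
  constructor
  intro x y hxy
  have h0 : (0 : ℝ≥0∞) < S.d x y := S.d_pos hxy
  have hev : ∀ᶠ p in 𝓝 (x, y), 0 < S.d p.1 p.2 := S.lsc (x, y) 0 h0
  rw [nhds_prod_eq, Filter.eventually_prod_iff] at hev
  obtain ⟨p, hp, q, hq, hpq⟩ := hev
  obtain ⟨U, hUp, hUo, hxU⟩ := mem_nhds_iff.1 hp
  obtain ⟨V, hVq, hVo, hyV⟩ := mem_nhds_iff.1 hq
  refine ⟨U, V, hUo, hVo, hxU, hyV, Set.disjoint_left.2 fun z hzU hzV => ?_⟩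
  have := hpq (hUp hzU) (hVq hzV)
  simp [S.d_self] at this

theorem ptD_le_d {z z' : Z} {F : Set Z} (h : z' ∈ F) : S.ptD z F ≤ S.d z z' :=
  iInf₂_le z' h

theorem le_ptD {z : Z} {F : Set Z} {c : ℝ≥0∞} (h : ∀ w ∈ F, c ≤ S.d z w) :
    c ≤ S.ptD z F := le_iInf₂ h

theorem ptD_eq_zero {z : Z} {F : Set Z} (h : z ∈ F) : S.ptD z F = 0 :=
  le_antisymm ((S.ptD_le_d h).trans (le_of_eq (S.d_self z))) zero_le

theorem ptD_triangle (z w : Z) (F : Set Z) : S.ptD z F ≤ S.d z w + S.ptD w F := by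
  simp only [ptD, ENNReal.add_iInf]
  exact le_iInf fun y => le_iInf fun hy =>
    ((S.ptD_le_d hy).trans (S.d_triangle z w y)).trans
      (le_of_eq rfl)

/-- In a compact topometric space, sublevel sets of the distance to a closed set are closed. -/
theorem isClosed_ptD_le [CompactSpace Z] {F : Set Z} (hF : IsClosed F) (r : ℝ≥0∞) :
    IsClosed {z | S.ptD z F ≤ r} := by
  rw [← isOpen_compl_iff, isOpen_iff_forall_mem_open]
  intro z hz
  simp only [mem_compl_iff, mem_setOf_eq, not_le] at hz
  obtain ⟨c, hrc, hc⟩ := exists_between hz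
  have hdc : ∀ y ∈ F, c < S.d z y := fun y hy => lt_of_lt_of_le hc (S.ptD_le_d hy)
  have key : ∀ y : Z, y ∈ F → ∃ U V : Set Z, IsOpen U ∧ z ∈ U ∧ IsOpen V ∧ y ∈ V ∧
      ∀ p ∈ U, ∀ q ∈ V, c < S.d p q := by
    intro y hy
    have hev : ∀ᶠ p in 𝓝 (z, y), c < S.d p.1 p.2 := S.lsc (z, y) c (hdc y hy)
    rw [nhds_prod_eq, Filter.eventually_prod_iff] at hev
    obtain ⟨p, hp, q, hq, hpq⟩ := hev
    obtain ⟨U, hUp, hUo, hxU⟩ := mem_nhds_iff.1 hp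
    obtain ⟨V, hVq, hVo, hyV⟩ := mem_nhds_iff.1 hq
    exact ⟨U, V, hUo, hxU, hVo, hyV, fun a ha b hb => hpq (hUp ha) (hVq hb)⟩
  choose! U V hUo hzU hVo hyV hUV using key
  have hFc : IsCompact F := hF.isCompact
  have hcov : F ⊆ ⋃ y ∈ F, V y := fun y hy => mem_biUnion hy (hyV y hy)
  obtain ⟨t, hts, htfin, hcov'⟩ := hFc.elim_finite_subcover_image (fun y hy => hVo y hy) hcov
  refine ⟨⋂ y ∈ t, U y, ?_, htfin.isOpen_biInter (fun y hy => hUo y (hts hy)),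
    mem_iInter₂.2 fun y hy => hzU y (hts hy)⟩
  intro w hw
  simp only [mem_compl_iff, mem_setOf_eq, not_le]
  refine lt_of_lt_of_le hrc (S.le_ptD fun q hq => ?_)
  obtain ⟨y, hyt, hqy⟩ := mem_iUnion₂.1 (hcov' hq)
  exact le_of_lt (hUV y (hts hyt) w (mem_iInter₂.1 hw y hyt) q hqy)

theorem lsc_ptD [CompactSpace Z] {F : Set Z} (hF : IsClosed F) :
    LowerSemicontinuous fun z => S.ptD z F := by
  intro z c hc
  have hcl := S.isClosed_ptD_le hF c
  have : z ∈ {w | S.ptD w F ≤ c}ᶜ := by simpa using not_le.2 hc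
  filter_upwards [hcl.isOpen_compl.mem_nhds this] with w hw
  exact not_le.1 (by simpa using hw)

end TopometricOn
section SemicontHelpers

variable {α : Type*} [TopologicalSpace α]

theorem usc_min_const {f : α → ℝ} (hf : UpperSemicontinuous f) (c : ℝ) :
    UpperSemicontinuous fun z => min (f z) c := by
  intro z y hy
  dsimp only at hy
  rcases lt_or_ge c y with h | h
  · exact Filter.Eventually.of_forall fun w => lt_of_le_of_lt (min_le_right _ _) h
  · have hfz : f z < y := by
      rcases le_total (f z) c with h' | h'
      · rwa [min_eq_left h'] at hy
      · rw [min_eq_right h'] at hy; linarith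
    filter_upwards [hf z y hfz] with w hw using lt_of_le_of_lt (min_le_left _ _) hw

theorem lsc_max_const {f : α → ℝ} (hf : LowerSemicontinuous f) (c : ℝ) :
    LowerSemicontinuous fun z => max (f z) c := by
  intro z y hy
  dsimp only at hy
  rcases lt_or_ge y c with h | h
  · exact Filter.Eventually.of_forall fun w => lt_of_lt_of_le h (le_max_right _ _)
  · have hfz : y < f z := by
      rcases le_total (f z) c with h' | h'
      · rw [max_eq_right h'] at hy; linarith
      · rwa [max_eq_left h'] at hy
    filter_upwards [hf z y hfz] with w hw using lt_of_lt_of_le hw (le_max_left _ _)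

theorem lsc_min_const {f : α → ℝ} (hf : LowerSemicontinuous f) (c : ℝ) :
    LowerSemicontinuous fun z => min (f z) c := by
  intro z y hy
  dsimp only at hy
  have h1 : y < f z := lt_of_lt_of_le hy (min_le_left _ _)
  have h2 : y < c := lt_of_lt_of_le hy (min_le_right _ _)
  filter_upwards [hf z y h1] with w hw using lt_min hw h2

theorem usc_max_const {f : α → ℝ} (hf : UpperSemicontinuous f) (c : ℝ) :
    UpperSemicontinuous fun z => max (f z) c := by
  intro z y hy
  dsimp only at hy
  have h1 : f z < y := lt_of_le_of_lt (le_max_left (f z) c) hy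
  have h2 : c < y := lt_of_le_of_lt (le_max_right (f z) c) hy
  filter_upwards [hf z y h1] with w hw using max_lt hw h2

theorem usc_const_sub {f : α → ℝ} (hf : LowerSemicontinuous f) (c : ℝ) :
    UpperSemicontinuous fun z => c - f z := by
  intro z y hy
  dsimp only at hy
  have : c - y < f z := by linarith
  filter_upwards [hf z _ this] with w hw
  linarith

theorem lsc_const_sub {f : α → ℝ} (hf : UpperSemicontinuous f) (c : ℝ) :
    LowerSemicontinuous fun z => c - f z := by
  intro z y hy
  dsimp only at hy
  have : f z < c - y := by linarith
  filter_upwards [hf z _ this] with w hw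
  linarith

theorem usc_of_uniform_approx {f : α → ℝ} {u : ℕ → α → ℝ}
    (h : ∀ n, UpperSemicontinuous (u n))
    (happrox : ∀ ε : ℝ, 0 < ε → ∃ n, ∀ z, |f z - u n z| ≤ ε) :
    UpperSemicontinuous f := by
  intro z c hc
  set ε := (c - f z) / 3 with hε
  have hε0 : 0 < ε := by simp only [hε]; linarith
  obtain ⟨n, hn⟩ := happrox ε hε0
  have h1 : u n z < c - ε := by
    have := abs_le.1 (hn z)
    have h2 := this.1
    have h3 := this.2
    simp only [hε] at *
    linarith
  filter_upwards [h n z _ h1] with w hw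
  have := abs_le.1 (hn w)
  have h2 := this.1
  linarith

theorem lsc_of_uniform_approx {f : α → ℝ} {u : ℕ → α → ℝ}
    (h : ∀ n, LowerSemicontinuous (u n))
    (happrox : ∀ ε : ℝ, 0 < ε → ∃ n, ∀ z, |f z - u n z| ≤ ε) :
    LowerSemicontinuous f := by
  intro z c hc
  set ε := (f z - c) / 3 with hε
  have hε0 : 0 < ε := by simp only [hε]; linarith
  obtain ⟨n, hn⟩ := happrox ε hε0
  have h1 : c + ε < u n z := by
    have := abs_le.1 (hn z)
    have h2 := this.1
    have h3 := this.2
    simp only [hε] at *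
    linarith
  filter_upwards [h n z _ h1] with w hw
  have := abs_le.1 (hn w)
  have h3 := this.2
  linarith

variable {W : Type*} [TopologicalSpace W]

theorem usc_iSup_compact [CompactSpace W] [Nonempty W] {F : α → W → ℝ} {M : ℝ}
    (hF : UpperSemicontinuous fun p : α × W => F p.1 p.2)
    (hM : ∀ z w, F z w ≤ M) :
    UpperSemicontinuous fun z => ⨆ w, F z w := by
  intro z c hc
  dsimp only at hc
  set m := ⨆ w, F z w with hm
  have hbdd : ∀ z : α, BddAbove (Set.range (F z)) :=
    fun z => ⟨M, by rintro _ ⟨w, rfl⟩; exact hM z w⟩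
  set c' := (m + c) / 2 with hc'
  have hmc' : m < c' := by simp only [hc']; linarith
  have hc'c : c' < c := by simp only [hc']; linarith
  have hopen : IsOpen {p : α × W | F p.1 p.2 < c'} := by
    have := upperSemicontinuous_iff_isOpen_preimage.1 hF c'
    exact this
  have hsub : ({z} : Set α) ×ˢ (Set.univ : Set W) ⊆ {p : α × W | F p.1 p.2 < c'} := by
    rintro ⟨a, w⟩ ⟨ha, -⟩
    rcases ha with rfl
    exact lt_of_le_of_lt (le_ciSup (hbdd a) w) hmc'
  obtain ⟨u, v, huo, hvo, hzu, hv, huv⟩ :=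
    generalized_tube_lemma isCompact_singleton isCompact_univ hopen hsub
  filter_upwards [huo.mem_nhds (hzu rfl)] with z' hz'
  refine lt_of_le_of_lt (ciSup_le fun w => ?_) hc'c
  exact le_of_lt (huv (Set.mk_mem_prod hz' (hv trivial)))

theorem lsc_iInf_compact [CompactSpace W] [Nonempty W] {F : α → W → ℝ} {M : ℝ}
    (hF : LowerSemicontinuous fun p : α × W => F p.1 p.2)
    (hM : ∀ z w, M ≤ F z w) :
    LowerSemicontinuous fun z => ⨅ w, F z w := by
  intro z c hc
  dsimp only at hc
  set m := ⨅ w, F z w with hm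
  have hbdd : ∀ z : α, BddBelow (Set.range (F z)) :=
    fun z => ⟨M, by rintro _ ⟨w, rfl⟩; exact hM z w⟩
  set c' := (m + c) / 2 with hc'
  have hmc' : c' < m := by simp only [hc']; linarith
  have hc'c : c < c' := by simp only [hc']; linarith
  have hopen : IsOpen {p : α × W | c' < F p.1 p.2} := by
    have := lowerSemicontinuous_iff_isOpen_preimage.1 hF c'
    exact this
  have hsub : ({z} : Set α) ×ˢ (Set.univ : Set W) ⊆ {p : α × W | c' < F p.1 p.2} := by
    rintro ⟨a, w⟩ ⟨ha, -⟩
    rcases ha with rfl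
    exact lt_of_lt_of_le hmc' (ciInf_le (hbdd a) w)
  obtain ⟨u, v, huo, hvo, hzu, hv, huv⟩ :=
    generalized_tube_lemma isCompact_singleton isCompact_univ hopen hsub
  filter_upwards [huo.mem_nhds (hzu rfl)] with z' hz'
  refine lt_of_lt_of_le hc'c (le_ciInf fun w => ?_)
  exact le_of_lt (huv (Set.mk_mem_prod hz' (hv trivial)))

end SemicontHelpers
theorem min_ne_top' {x B : ℝ≥0∞} (hB : B ≠ ⊤) : min x B ≠ ⊤ :=
  fun h => hB (eq_top_iff.2 (h ▸ min_le_right x B))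

theorem ennreal_min_add_min (x y B : ℝ≥0∞) : min (x + y) B ≤ min x B + min y B := by
  rcases le_total B x with h | h
  · calc min (x + y) B ≤ B := min_le_right _ _
      _ = min x B := (min_eq_right h).symm
      _ ≤ min x B + min y B := le_self_add
  · rcases le_total B y with h' | h'
    · calc min (x + y) B ≤ B := min_le_right _ _
        _ = min y B := (min_eq_right h').symm
        _ ≤ min x B + min y B := le_add_self
    · calc min (x + y) B ≤ x + y := min_le_left _ _
        _ = min x B + min y B := by rw [min_eq_left h, min_eq_left h']

theorem lsc_toReal_min {α : Type*} [TopologicalSpace α] {g : α → ℝ≥0∞} {B : ℝ≥0∞}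
    (hg : LowerSemicontinuous g) (hB : B ≠ ⊤) :
    LowerSemicontinuous fun z => (min (g z) B).toReal := by
  intro z c hc
  dsimp only at hc
  rcases lt_or_ge c 0 with h0 | h0
  · exact Filter.Eventually.of_forall fun w => lt_of_lt_of_le h0 ENNReal.toReal_nonneg
  · have hlt : ENNReal.ofReal c < min (g z) B := by
      rw [ENNReal.ofReal_lt_iff_lt_toReal h0 (min_ne_top' hB)]
      exact hc
    have hgz : ENNReal.ofReal c < g z := lt_of_lt_of_le hlt (min_le_left _ _)
    have hBz : ENNReal.ofReal c < B := lt_of_lt_of_le hlt (min_le_right _ _)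
    filter_upwards [hg z _ hgz] with w hw
    have h1 : ENNReal.ofReal c < min (g w) B := lt_min hw hBz
    have h2 := ENNReal.toReal_strict_mono (min_ne_top' hB) h1
    rwa [ENNReal.toReal_ofReal h0] at h2

namespace TopometricOn

variable {Z : Type*} [TopologicalSpace Z] (S : TopometricOn Z)

/-- Truncated real-valued distance. -/
noncomputable def rD (B : ℝ≥0∞) (a b : Z) : ℝ := (min (S.d a b) B).toReal

theorem rD_nonneg (B : ℝ≥0∞) (a b : Z) : 0 ≤ S.rD B a b := ENNReal.toReal_nonneg

theorem rD_self (B : ℝ≥0∞) (a : Z) : S.rD B a a = 0 := by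
  simp [rD, S.d_self]

theorem rD_symm (B : ℝ≥0∞) (a b : Z) : S.rD B a b = S.rD B b a := by
  simp [rD, S.d_symm a b]

theorem rD_le_top (B : ℝ≥0∞) (hB : B ≠ ⊤) (a b : Z) : S.rD B a b ≤ B.toReal :=
  ENNReal.toReal_mono hB (min_le_right _ _)

theorem rD_triangle (B : ℝ≥0∞) (hB : B ≠ ⊤) (a b c : Z) :
    S.rD B a c ≤ S.rD B a b + S.rD B b c := by
  have h1 : min (S.d a c) B ≤ min (S.d a b) B + min (S.d b c) B :=
    le_trans (min_le_min_right B (S.d_triangle a b c)) (ennreal_min_add_min _ _ _)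
  rw [rD, rD, rD, ← ENNReal.toReal_add (min_ne_top' hB) (min_ne_top' hB)]
  exact ENNReal.toReal_mono (ENNReal.add_ne_top.2 ⟨min_ne_top' hB, min_ne_top' hB⟩) h1

theorem lsc_rD (B : ℝ≥0∞) (hB : B ≠ ⊤) :
    LowerSemicontinuous fun p : Z × Z => S.rD B p.1 p.2 := by
  have h : LowerSemicontinuous fun p : Z × Z => S.d p.1 p.2 := S.lsc
  exact lsc_toReal_min h hB

end TopometricOn

/-- Truncation of an extended distance-like quantity. -/
noncomputable def trunc (s : ℝ) (v : ℝ≥0∞) : ℝ := (min v (ENNReal.ofReal s)).toReal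

theorem trunc_nonneg (s : ℝ) (v : ℝ≥0∞) : 0 ≤ trunc s v := ENNReal.toReal_nonneg

theorem trunc_le (s : ℝ) (hs : 0 ≤ s) (v : ℝ≥0∞) : trunc s v ≤ s := by
  rw [trunc]
  calc (min v (ENNReal.ofReal s)).toReal ≤ (ENNReal.ofReal s).toReal :=
        ENNReal.toReal_mono ENNReal.ofReal_ne_top (min_le_right _ _)
    _ = s := ENNReal.toReal_ofReal hs

theorem trunc_zero (s : ℝ) : trunc s 0 = 0 := by simp [trunc]

theorem trunc_eq_of_le {s : ℝ} (hs : 0 ≤ s) {v : ℝ≥0∞} (h : ENNReal.ofReal s ≤ v) :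
    trunc s v = s := by
  rw [trunc, min_eq_right h, ENNReal.toReal_ofReal hs]

namespace TopometricOn

variable {Z : Type*} [TopologicalSpace Z] (S : TopometricOn Z)

/-- Lipschitz property of truncated point-to-set distance. -/
theorem trunc_ptD_lip {s : ℝ} (hs : 0 ≤ s) (F : Set Z) (a b : Z) :
    |trunc s (S.ptD a F) - trunc s (S.ptD b F)| ≤ S.rD (ENNReal.ofReal (s + 1)) a b := by
  have key : ∀ x y : Z, trunc s (S.ptD x F) - trunc s (S.ptD y F) ≤
      S.rD (ENNReal.ofReal (s + 1)) x y := by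
    intro x y
    have h1 : min (S.ptD x F) (ENNReal.ofReal s) ≤
        min (S.ptD y F) (ENNReal.ofReal s) + min (S.d x y) (ENNReal.ofReal (s+1)) := by
      calc min (S.ptD x F) (ENNReal.ofReal s)
          ≤ min (S.d x y + S.ptD y F) (ENNReal.ofReal s) :=
            min_le_min_right _ (S.ptD_triangle x y F)
        _ = min (S.ptD y F + S.d x y) (ENNReal.ofReal s) := by rw [add_comm]
        _ ≤ min (S.ptD y F) (ENNReal.ofReal s) + min (S.d x y) (ENNReal.ofReal s) :=
            ennreal_min_add_min _ _ _
        _ ≤ min (S.ptD y F) (ENNReal.ofReal s) + min (S.d x y) (ENNReal.ofReal (s+1)) :=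
            add_le_add (le_refl _) (min_le_min (le_refl _)
              (ENNReal.ofReal_le_ofReal (by linarith)))
    have h2 := ENNReal.toReal_mono
      (ENNReal.add_ne_top.2 ⟨min_ne_top' ENNReal.ofReal_ne_top, min_ne_top' ENNReal.ofReal_ne_top⟩) h1
    rw [ENNReal.toReal_add (min_ne_top' ENNReal.ofReal_ne_top)
      (min_ne_top' ENNReal.ofReal_ne_top)] at h2
    have h3 : trunc s (S.ptD x F) ≤ trunc s (S.ptD y F) + S.rD (ENNReal.ofReal (s+1)) x y := h2
    linarith
  rw [abs_sub_le_iff]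
  refine ⟨key a b, ?_⟩
  rw [S.rD_symm]
  exact key b a

theorem lsc_trunc_ptD [CompactSpace Z] {F : Set Z} (hF : IsClosed F) (s : ℝ) :
    LowerSemicontinuous fun z => trunc s (S.ptD z F) :=
  lsc_toReal_min (S.lsc_ptD hF) ENNReal.ofReal_ne_top

theorem ofReal_abs_le_d {f : Z → ℝ} {B : ℝ≥0∞}
    (h : ∀ a b, |f a - f b| ≤ S.rD B a b) (a b : Z) :
    ENNReal.ofReal |f a - f b| ≤ S.d a b := by
  refine le_trans ?_ (min_le_left (S.d a b) B)
  have h2 := h a b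
  rw [rD] at h2
  exact ENNReal.ofReal_le_of_le_toReal h2

end TopometricOn
namespace TopometricOn

variable {Z : Type*} [TopologicalSpace Z] (S : TopometricOn Z)

/-- Closed metric neighborhood ("cone") of a set. -/
def cone (A : Set Z) (r : ℝ) : Set Z := {z | S.ptD z A ≤ ENNReal.ofReal r}

theorem isClosed_cone [CompactSpace Z] {A : Set Z} (hA : IsClosed A) (r : ℝ) :
    IsClosed (S.cone A r) := S.isClosed_ptD_le hA _

theorem subset_cone {A : Set Z} {r : ℝ} (hr : 0 ≤ r) : A ⊆ S.cone A r := fun z hz => by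
  simp only [cone, mem_setOf_eq, S.ptD_eq_zero hz]
  exact zero_le

theorem lt_d_of_not_mem_cone {A : Set Z} {r : ℝ} {z : Z} (h : z ∉ S.cone A r)
    {v : Z} (hv : v ∈ A) : ENNReal.ofReal r < S.d z v := by
  simp only [cone, mem_setOf_eq, not_le] at h
  exact lt_of_lt_of_le h (S.ptD_le_d hv)

theorem le_add_of_ptD_le {B : ℝ≥0∞} {u : Z → ℝ}
    (hLip : ∀ a b, |u a - u b| ≤ S.rD B a b) {A : Set Z} {z : Z} {r m : ℝ} (hr : 0 ≤ r)
    (hq : S.ptD z A ≤ ENNReal.ofReal r) (hm : ∀ v ∈ A, u v ≤ m) : u z ≤ m + r := by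
  have key : ∀ ε, 0 < ε → u z ≤ (m + r) + ε := by
    intro ε hε
    have hlt : S.ptD z A < ENNReal.ofReal (r + ε) :=
      lt_of_le_of_lt hq ((ENNReal.ofReal_lt_ofReal_iff (by linarith)).2 (by linarith))
    rw [ptD] at hlt
    obtain ⟨v, hv⟩ := iInf_lt_iff.1 hlt
    obtain ⟨hvA, hdv⟩ := iInf_lt_iff.1 hv
    have h1 : u z - u v ≤ S.rD B z v := le_trans (le_abs_self _) (hLip z v)
    have h2 : S.rD B z v ≤ r + ε := by
      rw [rD]
      calc (min (S.d z v) B).toReal ≤ (ENNReal.ofReal (r + ε)).toReal :=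
            ENNReal.toReal_mono ENNReal.ofReal_ne_top
              (le_trans (min_le_left _ _) (le_of_lt hdv))
        _ = r + ε := ENNReal.toReal_ofReal (by linarith)
    have h3 := hm v hvA
    linarith
  exact le_of_forall_pos_le_add key

theorem chain_exists [CompactSpace Z]
    {u ℓ : Z → ℝ} {γ : ℝ} {B : ℝ≥0∞}
    (hγ : 0 < γ)
    (hu : UpperSemicontinuous u) (hl : LowerSemicontinuous ℓ)
    (hul : ∀ z, u z ≤ ℓ z)
    (huLip : ∀ a b, |u a - u b| ≤ S.rD B a b)
    (K : ℕ) :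
    ∃ V : ℕ → Set Z, ∀ k, k ≤ K →
      IsOpen (V k) ∧ ({z | ℓ z ≤ (k : ℝ) * γ} ⊆ V k) ∧
      (closure (V k) ⊆ {z | u z < ((k : ℝ) + 1) * γ}) ∧
      (∀ i, i < k → S.cone (closure (V i)) (((k - i - 1 : ℕ) : ℝ) * γ) ⊆ V k) := by
  haveI : T2Space Z := S.t2
  have hCclosed : ∀ c : ℝ, IsClosed {z | ℓ z ≤ c} := fun c =>
    lowerSemicontinuous_iff_isClosed_preimage.1 hl c
  have hOopen : ∀ c : ℝ, IsOpen {z | u z < c} := fun c =>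
    upperSemicontinuous_iff_isOpen_preimage.1 hu c
  induction K with
  | zero =>
    have hsub : {z | ℓ z ≤ (0 : ℝ) * γ} ⊆ {z | u z < ((0 : ℝ) + 1) * γ} := by
      intro z hz
      simp only [mem_setOf_eq] at *
      nlinarith [hul z]
    obtain ⟨V0, hV0o, hV0s, hV0c⟩ :=
      normal_exists_closure_subset (hCclosed _) (hOopen _) hsub
    refine ⟨fun _ => V0, fun k hk => ?_⟩
    interval_cases k
    refine ⟨hV0o, by simpa using hV0s, by simpa using hV0c, fun i hi => absurd hi (Nat.not_lt_zero i)⟩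
  | succ K ih =>
    obtain ⟨V, hV⟩ := ih
    set D : Set Z := {z | ℓ z ≤ ((K : ℝ) + 1) * γ} ∪
      ⋃ i ∈ Finset.range (K + 1), S.cone (closure (V i)) (((K - i : ℕ) : ℝ) * γ) with hD
    have hDclosed : IsClosed D := by
      refine IsClosed.union (hCclosed _) ?_
      refine Set.Finite.isClosed_biUnion (Finset.finite_toSet _) fun i _ => ?_
      exact S.isClosed_cone isClosed_closure _
    have hDO : D ⊆ {z | u z < ((K : ℝ) + 1 + 1) * γ} := by
      rintro z (hz | hz)
      · simp only [mem_setOf_eq] at *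
        nlinarith [hul z]
      · simp only [Set.mem_iUnion, Finset.mem_range] at hz
        obtain ⟨i, hi, hzi⟩ := hz
        have hiK : i ≤ K := Nat.lt_succ_iff.1 hi
        have hcastKi : (((K - i : ℕ)) : ℝ) = (K : ℝ) - (i : ℝ) := by
          push_cast [Nat.cast_sub hiK]
          ring
        have hbound : ∀ v ∈ closure (V i), u v ≤ ((i : ℝ) + 1) * γ := by
          intro v hv
          exact le_of_lt ((hV i hiK).2.2.1 hv)
        have h1 : u z ≤ ((i : ℝ) + 1) * γ + ((K - i : ℕ) : ℝ) * γ := by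
          refine S.le_add_of_ptD_le huLip ?_ hzi hbound
          have : (0:ℝ) ≤ ((K - i : ℕ) : ℝ) := Nat.cast_nonneg _
          positivity
        simp only [mem_setOf_eq]
        rw [hcastKi] at h1
        nlinarith [h1]
    obtain ⟨V', hV'o, hV's, hV'c⟩ :=
      normal_exists_closure_subset hDclosed (hOopen _) hDO
    refine ⟨Function.update V (K+1) V', fun k hk => ?_⟩
    rcases Nat.lt_succ_iff_lt_or_eq.1 (Nat.lt_succ_of_le hk) with hkK | rfl
    · have hkK' : k ≤ K := Nat.lt_succ_iff.1 hkK
      have hne : k ≠ K + 1 := by omega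
      rw [Function.update_of_ne hne]
      obtain ⟨h1, h2, h3, h4⟩ := hV k hkK'
      refine ⟨h1, h2, h3, fun i hi => ?_⟩
      have hne' : i ≠ K + 1 := by omega
      rw [Function.update_of_ne hne']
      exact h4 i hi
    · rw [Function.update_self]
      refine ⟨hV'o, ?_, ?_, ?_⟩
      · intro z hz
        refine hV's (Or.inl ?_)
        simpa using hz
      · intro z hz
        have := hV'c hz
        simpa using this
      · intro i hi
        have hne' : i ≠ K + 1 := by omega
        rw [Function.update_of_ne hne']
        intro z hz
        refine hV's (Or.inr ?_)
        simp only [Set.mem_iUnion, Finset.mem_range]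
        refine ⟨i, hi, ?_⟩
        have : (K + 1 - i - 1 : ℕ) = (K - i : ℕ) := by omega
        rwa [this] at hz

end TopometricOn
section MoreHelpers

variable {α : Type*} [TopologicalSpace α]

theorem usc_add_const {f : α → ℝ} (hf : UpperSemicontinuous f) (c : ℝ) :
    UpperSemicontinuous fun z => f z + c := by
  intro z y hy
  dsimp only at hy
  filter_upwards [hf z (y - c) (by linarith)] with w hw
  linarith

theorem usc_neg_of_lsc {f : α → ℝ} (hf : LowerSemicontinuous f) :
    UpperSemicontinuous fun z => -f z := by
  intro z y hy
  dsimp only at hy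
  filter_upwards [hf z (-y) (by linarith)] with w hw
  linarith

theorem abs_min_const_sub (a b c : ℝ) : |min a c - min b c| ≤ |a - b| := by
  have key : ∀ x y : ℝ, min x c - min y c ≤ |x - y| := by
    intro x y
    rcases le_total y c with h | h
    · rw [min_eq_left h]
      have h1 := min_le_left x c
      have h2 := le_abs_self (x - y)
      linarith
    · rw [min_eq_right h]
      have h1 := min_le_right x c
      have h2 := abs_nonneg (x - y)
      linarith
  rw [abs_sub_le_iff]
  exact ⟨key a b, by rw [abs_sub_comm]; exact key b a⟩

theorem abs_max_const_sub (a b c : ℝ) : |max a c - max b c| ≤ |a - b| := by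
  have key : ∀ x y : ℝ, max x c - max y c ≤ |x - y| := by
    intro x y
    rcases le_total c x with h | h
    · rw [max_eq_left h]
      have h1 := le_max_left y c
      have h2 := le_abs_self (x - y)
      linarith
    · rw [max_eq_right h]
      have h1 := le_max_right y c
      have h2 := abs_nonneg (x - y)
      linarith
  rw [abs_sub_le_iff]
  exact ⟨key a b, by rw [abs_sub_comm]; exact key b a⟩

/-- clamp to `[0, s]`. -/
noncomputable def rclamp (s x : ℝ) : ℝ := min (max x 0) s

theorem rclamp_lip (s a b : ℝ) : |rclamp s a - rclamp s b| ≤ |a - b| :=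
  le_trans (abs_min_const_sub _ _ _) (abs_max_const_sub _ _ _)

theorem rclamp_mono {s a b : ℝ} (h : a ≤ b) : rclamp s a ≤ rclamp s b :=
  min_le_min (max_le_max h (le_refl _)) (le_refl _)

theorem rclamp_nonneg {s : ℝ} (hs : 0 ≤ s) (x : ℝ) : 0 ≤ rclamp s x :=
  le_min (le_max_right _ _) hs

theorem rclamp_le_s {s : ℝ} (x : ℝ) : rclamp s x ≤ s := min_le_right _ _

theorem le_rclamp {s x : ℝ} (h : x ≤ s) : x ≤ rclamp s x :=
  le_min (le_max_left _ _) h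

theorem rclamp_le_self {x s : ℝ} (h : 0 ≤ x) : rclamp s x ≤ x :=
  le_trans (min_le_left _ _) (by rw [max_eq_left h])

end MoreHelpers

namespace TopometricOn

variable {Z : Type*} [TopologicalSpace Z] (S : TopometricOn Z)

set_option maxHeartbeats 1600000 in
theorem step_lemma [CompactSpace Z] [Nonempty Z]
    {u ℓ : Z → ℝ} {γ s : ℝ}
    (hγ : 0 < γ) (hγ1 : γ ≤ 1) (hs : 0 < s)
    (hu : UpperSemicontinuous u) (hl : LowerSemicontinuous ℓ)
    (hul : ∀ z, u z ≤ ℓ z) (hu0 : ∀ z, 0 ≤ u z) (hls : ∀ z, ℓ z ≤ s)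
    (huLip : ∀ a b, |u a - u b| ≤ S.rD (ENNReal.ofReal (s+1)) a b)
    (hlLip : ∀ a b, |ℓ a - ℓ b| ≤ S.rD (ENNReal.ofReal (s+1)) a b) :
    ∃ u₁ ℓ₁ : Z → ℝ,
      UpperSemicontinuous u₁ ∧ LowerSemicontinuous ℓ₁ ∧
      (∀ z, u₁ z ≤ ℓ₁ z) ∧ (∀ z, 0 ≤ u₁ z) ∧ (∀ z, ℓ₁ z ≤ s) ∧
      (∀ a b, |u₁ a - u₁ b| ≤ S.rD (ENNReal.ofReal (s+1)) a b) ∧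
      (∀ a b, |ℓ₁ a - ℓ₁ b| ≤ S.rD (ENNReal.ofReal (s+1)) a b) ∧
      (∀ z, ℓ₁ z - u₁ z ≤ 6 * γ) ∧
      (∀ z, u z - 6 * γ ≤ u₁ z) ∧ (∀ z, ℓ₁ z ≤ ℓ z + 2 * γ) := by
  classical
  set B : ℝ≥0∞ := ENNReal.ofReal (s + 1) with hBdef
  have hB : B ≠ ⊤ := ENNReal.ofReal_ne_top
  set K : ℕ := ⌈s / γ⌉₊ with hKdef
  have hsK : s ≤ (K : ℝ) * γ := by
    have h1 : s / γ ≤ (K : ℝ) := Nat.le_ceil _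
    calc s = (s / γ) * γ := by field_simp
      _ ≤ (K : ℝ) * γ := by nlinarith
  have hKs : (K : ℝ) * γ ≤ s + γ := by
    have h1 : (K : ℝ) < s / γ + 1 := by
      refine Nat.ceil_lt_add_one ?_
      positivity
    have h2 : (s / γ) * γ = s := by field_simp
    nlinarith
  obtain ⟨V, hV⟩ := S.chain_exists hγ hu hl hul huLip K
  -- index functions
  have hVK : ∀ z : Z, z ∈ V K := by
    intro z
    refine (hV K le_rfl).2.1 ?_
    simp only [mem_setOf_eq]
    exact le_trans (hls z) hsK
  set a : Z → ℕ := fun z => sInf {k | z ∈ V k} with hadef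
  set b : Z → ℕ := fun z => sInf {k | z ∈ closure (V k)} with hbdef
  have haV : ∀ z, z ∈ V (a z) := by
    intro z
    have h : a z ∈ {k | z ∈ V k} := Nat.sInf_mem ⟨K, show z ∈ V K from hVK z⟩
    exact h
  have haK : ∀ z, a z ≤ K := fun z => Nat.sInf_le (show z ∈ V K from hVK z)
  have hbV : ∀ z, z ∈ closure (V (b z)) := by
    intro z
    have h : b z ∈ {k | z ∈ closure (V k)} :=
      Nat.sInf_mem ⟨K, show z ∈ closure (V K) from subset_closure (hVK z)⟩
    exact h
  have hbK : ∀ z, b z ≤ K := fun z =>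
    Nat.sInf_le (show z ∈ closure (V K) from subset_closure (hVK z))
  have hnota : ∀ z j, j < a z → z ∉ V j := fun z j hj hz =>
    ((Nat.sInf_le (show z ∈ V j from hz)).not_gt hj).elim
  have hnotb : ∀ z j, j < b z → z ∉ closure (V j) := fun z j hj hz =>
    ((Nat.sInf_le (show z ∈ closure (V j) from hz)).not_gt hj).elim
  have haleb : ∀ z, b z ≤ a z := fun z =>
    Nat.sInf_le (show z ∈ closure (V (a z)) from subset_closure (haV z))
  have hablt : ∀ z, a z ≤ b z + 1 := by
    intro z
    rcases Nat.lt_or_ge (b z) K with hbK' | hbK'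
    · have hsucc : b z + 1 ≤ K := hbK'
      have hcone := (hV (b z + 1) hsucc).2.2.2 (b z) (Nat.lt_succ_self _)
      have hzc : z ∈ S.cone (closure (V (b z))) (((b z + 1 - b z - 1 : ℕ) : ℝ) * γ) := by
        refine S.subset_cone ?_ (hbV z)
        positivity
      exact Nat.sInf_le (show z ∈ V (b z + 1) from hcone hzc)
    · have : b z = K := le_antisymm (hbK z) hbK'
      calc a z ≤ K := haK z
        _ ≤ b z + 1 := by omega
  set g : Z → ℝ := fun z => γ * (a z) with hgdef
  set h : Z → ℝ := fun z => γ * ((b z) + 1) with hhdef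
  -- g bounds
  have hg0 : ∀ z, 0 ≤ g z := fun z => by positivity
  have hgK : ∀ z, g z ≤ (K:ℝ) * γ := fun z => by
    have := haK z
    have : (a z : ℝ) ≤ K := Nat.cast_le.2 this
    simp only [hgdef]; nlinarith
  have hgu : ∀ z, u z - γ ≤ g z := by
    intro z
    have hmem : z ∈ {w | u w < ((a z : ℝ) + 1) * γ} :=
      (hV (a z) (haK z)).2.2.1 (subset_closure (haV z))
    simp only [mem_setOf_eq] at hmem
    simp only [hgdef]
    nlinarith
  have hgl : ∀ z, g z ≤ ℓ z + γ := by
    intro z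
    have hl0 : 0 ≤ ℓ z := le_trans (hu0 z) (hul z)
    set k0 : ℕ := ⌈ℓ z / γ⌉₊ with hk0
    have hk0K : k0 ≤ K := Nat.ceil_le_ceil ((div_le_div_iff_of_pos_right hγ).2 (hls z))
    have hzk0 : z ∈ {w | ℓ w ≤ (k0 : ℝ) * γ} := by
      simp only [mem_setOf_eq]
      have h1 : ℓ z / γ ≤ (k0 : ℝ) := Nat.le_ceil _
      calc ℓ z = (ℓ z / γ) * γ := by field_simp
        _ ≤ (k0 : ℝ) * γ := by nlinarith
    have hzV : z ∈ V k0 := (hV k0 hk0K).2.1 hzk0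
    have hak0 : a z ≤ k0 := Nat.sInf_le (show z ∈ V k0 from hzV)
    have h1 : (k0 : ℝ) < ℓ z / γ + 1 := Nat.ceil_lt_add_one (by positivity)
    have h2 : (ℓ z / γ) * γ = ℓ z := by field_simp
    have h3 : (a z : ℝ) ≤ (k0 : ℝ) := Nat.cast_le.2 hak0
    simp only [hgdef]
    nlinarith
  have hgh : ∀ z, g z ≤ h z := by
    intro z
    have := haleb z  -- b ≤ a???  we need a ≤ b + 1
    have h1 := hablt z
    have h2 : (a z : ℝ) ≤ (b z : ℝ) + 1 := by exact_mod_cast h1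
    simp only [hgdef, hhdef]
    nlinarith
  have hhg : ∀ z, h z ≤ g z + γ := by
    intro z
    have h1 := haleb z
    have h2 : (b z : ℝ) ≤ (a z : ℝ) := Nat.cast_le.2 h1
    simp only [hgdef, hhdef]
    nlinarith
  -- defect of g
  have hdefect : ∀ z w, g w - g z ≤ S.rD B z w + 2 * γ := by
    intro z w
    rcases Nat.lt_or_ge (a z + 2) (a w) with hlt | hge
    · -- a w ≥ a z + 3
      set m : ℕ := a w - 1 with hm
      have hmK : m ≤ K := le_trans (Nat.sub_le _ _) (haK w)
      have hiltm : a z < m := by omega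
      have hcone := (hV m hmK).2.2.2 (a z) hiltm
      have hwnot : w ∉ V m := hnota w m (by omega)
      have hwnotc : w ∉ S.cone (closure (V (a z))) (((m - a z - 1 : ℕ) : ℝ) * γ) :=
        fun hc => hwnot (hcone hc)
      have hdlt := S.lt_d_of_not_mem_cone hwnotc (subset_closure (haV z))
      set r : ℝ := ((m - a z - 1 : ℕ) : ℝ) * γ with hr
      have hr0 : 0 ≤ r := by positivity
      have hrs : r ≤ s + 1 := by
        have h1 : (m - a z - 1 : ℕ) ≤ K := by omega
        have h2 : ((m - a z - 1 : ℕ) : ℝ) ≤ (K : ℝ) := Nat.cast_le.2 h1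
        have h3 : r ≤ (K:ℝ) * γ := by simp only [hr]; nlinarith
        linarith [hKs]
      have hrd : r ≤ S.rD B z w := by
        rw [rD]
        have h1 : ENNReal.ofReal r ≤ min (S.d z w) B := by
          refine le_min ?_ ?_
          · rw [S.d_symm]
            exact le_of_lt hdlt
          · rw [hBdef]
            exact ENNReal.ofReal_le_ofReal hrs
        calc r = (ENNReal.ofReal r).toReal := (ENNReal.toReal_ofReal hr0).symm
          _ ≤ (min (S.d z w) B).toReal := ENNReal.toReal_mono (min_ne_top' hB) h1
      have hcast : ((m - a z - 1 : ℕ) : ℝ) = (a w : ℝ) - (a z : ℝ) - 2 := by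
        have h1 : (m - a z - 1 : ℕ) = a w - (a z + 2) := by omega
        rw [h1, Nat.cast_sub (by omega : a z + 2 ≤ a w)]
        push_cast
        ring
      simp only [hgdef]
      rw [hcast] at hr
      have : r = ((a w : ℝ) - (a z : ℝ) - 2) * γ := hr
      nlinarith [hrd]
    · -- a w ≤ a z + 2
      have h1 : (a w : ℝ) ≤ (a z : ℝ) + 2 := by exact_mod_cast hge
      have h2 := S.rD_nonneg B z w
      simp only [hgdef]
      nlinarith
  -- defect of h
  have hhdefect : ∀ z w, h w - h z ≤ S.rD B z w + 3 * γ := by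
    intro z w
    have h1 := hdefect z w
    have h2 := hhg w
    have h3 := hgh z
    linarith
  -- semicontinuity of g and h
  have hgusc : UpperSemicontinuous g := by
    rw [upperSemicontinuous_iff_isOpen_preimage]
    intro y
    have hset : g ⁻¹' Set.Iio y = ⋃ k ∈ {k : ℕ | k ≤ K ∧ γ * (k:ℝ) < y}, V k := by
      ext z
      simp only [Set.mem_preimage, Set.mem_Iio, Set.mem_iUnion, Set.mem_setOf_eq]
      constructor
      · intro hz
        exact ⟨a z, ⟨haK z, hz⟩, haV z⟩
      · rintro ⟨k, ⟨hkK, hky⟩, hzk⟩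
        have h1 : a z ≤ k := Nat.sInf_le (show z ∈ V k from hzk)
        have h2 : (a z : ℝ) ≤ (k : ℝ) := Nat.cast_le.2 h1
        have : g z ≤ γ * (k : ℝ) := by simp only [hgdef]; nlinarith
        linarith
    rw [hset]
    exact isOpen_biUnion fun k hk => (hV k hk.1).1
  have hhlsc : LowerSemicontinuous h := by
    rw [lowerSemicontinuous_iff_isClosed_preimage]
    intro y
    have hset : h ⁻¹' Set.Iic y =
        ⋃ k ∈ {k : ℕ | k ≤ K ∧ γ * ((k:ℝ) + 1) ≤ y}, closure (V k) := by
      ext z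
      simp only [Set.mem_preimage, Set.mem_Iic, Set.mem_iUnion, Set.mem_setOf_eq]
      constructor
      · intro hz
        exact ⟨b z, ⟨hbK z, hz⟩, hbV z⟩
      · rintro ⟨k, ⟨hkK, hky⟩, hzk⟩
        have h1 : b z ≤ k := Nat.sInf_le (show z ∈ closure (V k) from hzk)
        have h2 : (b z : ℝ) ≤ (k : ℝ) := Nat.cast_le.2 h1
        have : h z ≤ γ * ((k:ℝ) + 1) := by simp only [hhdef]; nlinarith
        linarith
    rw [hset]
    refine Set.Finite.isClosed_biUnion ?_ fun k _ => isClosed_closure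
    exact (Set.finite_Iic K).subset fun k hk => hk.1
  -- convolutions
  set u' : Z → ℝ := fun z => ⨆ w, (g w - S.rD B z w) with hu'def
  set ℓ' : Z → ℝ := fun z => ⨅ w, (h w + S.rD B z w) with hl'def
  have hbddu : ∀ z, BddAbove (Set.range fun w => g w - S.rD B z w) := fun z =>
    ⟨(K:ℝ)*γ, by rintro _ ⟨w, rfl⟩; have := hgK w; have := S.rD_nonneg B z w; simp only []; linarith⟩
  have hh0 : ∀ z, 0 ≤ h z := fun z => by simp only [hhdef]; positivity
  have hbddl : ∀ z, BddBelow (Set.range fun w => h w + S.rD B z w) := fun z =>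
    ⟨0, by rintro _ ⟨w, rfl⟩; have := hh0 w; have := S.rD_nonneg B z w; simp only []; linarith⟩
  have hu'g : ∀ z, g z ≤ u' z := fun z => by
    have h1 := le_ciSup (hbddu z) z
    simpa [S.rD_self] using h1
  have hu'le : ∀ z, u' z ≤ g z + 2*γ := fun z => ciSup_le fun w => by
    have := hdefect z w; linarith
  have hl'h : ∀ z, ℓ' z ≤ h z := fun z => by
    have h1 := ciInf_le (hbddl z) z
    simpa [S.rD_self] using h1
  have hl'ge : ∀ z, h z - 3*γ ≤ ℓ' z := fun z => le_ciInf fun w => by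
    have h1 := hhdefect w z
    have h2 : S.rD B w z = S.rD B z w := S.rD_symm B w z
    linarith
  have hu'lipkey : ∀ z1 z2, u' z1 ≤ u' z2 + S.rD B z1 z2 := by
    intro z1 z2
    refine ciSup_le fun w => ?_
    have htri : S.rD B z2 w ≤ S.rD B z2 z1 + S.rD B z1 w := S.rD_triangle B hB z2 z1 w
    have hle := le_ciSup (hbddu z2) w
    have hsym : S.rD B z2 z1 = S.rD B z1 z2 := S.rD_symm B z2 z1
    linarith
  have hu'lip : ∀ z1 z2, |u' z1 - u' z2| ≤ S.rD B z1 z2 := by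
    intro z1 z2
    rw [abs_sub_le_iff]
    constructor
    · have := hu'lipkey z1 z2; linarith
    · have := hu'lipkey z2 z1; rw [S.rD_symm B z2 z1] at this; linarith
  have hl'lipkey : ∀ z1 z2, ℓ' z1 ≤ ℓ' z2 + S.rD B z1 z2 := by
    intro z1 z2
    rw [← sub_le_iff_le_add]
    refine le_ciInf fun w => ?_
    have htri : S.rD B z1 w ≤ S.rD B z1 z2 + S.rD B z2 w := S.rD_triangle B hB z1 z2 w
    have hle := ciInf_le (hbddl z1) w
    linarith
  have hl'lip : ∀ z1 z2, |ℓ' z1 - ℓ' z2| ≤ S.rD B z1 z2 := by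
    intro z1 z2
    rw [abs_sub_le_iff]
    constructor
    · have := hl'lipkey z1 z2; linarith
    · have := hl'lipkey z2 z1; rw [S.rD_symm B z2 z1] at this; linarith
  have hu'usc : UpperSemicontinuous u' := by
    have h1 : UpperSemicontinuous fun p : Z × Z => g p.2 :=
      by have := UpperSemicontinuous.comp hgusc (continuous_snd : Continuous (Prod.snd : Z × Z → Z)); exact this
    have h2 : UpperSemicontinuous fun p : Z × Z => -(S.rD B p.1 p.2) :=
      usc_neg_of_lsc (S.lsc_rD B hB)
    have hj : UpperSemicontinuous fun p : Z × Z => g p.2 - S.rD B p.1 p.2 := by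
      simpa [sub_eq_add_neg] using h1.add h2
    exact usc_iSup_compact (M := (K:ℝ)*γ) hj fun z w => by
      have := hgK w; have := S.rD_nonneg B z w; linarith
  have hl'lsc : LowerSemicontinuous ℓ' := by
    have h1 : LowerSemicontinuous fun p : Z × Z => h p.2 :=
      by have := LowerSemicontinuous.comp hhlsc (continuous_snd : Continuous (Prod.snd : Z × Z → Z)); exact this
    have hj : LowerSemicontinuous fun p : Z × Z => h p.2 + S.rD B p.1 p.2 :=
      h1.add (S.lsc_rD B hB)
    exact lsc_iInf_compact (M := 0) hj fun z w => by
      have := hh0 w; have := S.rD_nonneg B z w; linarith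
  have hordu : ∀ z, u' z - 5*γ ≤ ℓ' z := by
    intro z
    have h1 := hu'le z
    have h2 := hhg z
    have h3 := hl'ge z
    have h4 := hgh z
    linarith
  -- final pair
  refine ⟨fun z => rclamp s (u' z - 5*γ), fun z => rclamp s (ℓ' z),
    ?_, ?_, ?_, ?_, ?_, ?_, ?_, ?_, ?_, ?_⟩
  · have h1 : UpperSemicontinuous fun z => u' z + (-(5*γ)) := usc_add_const hu'usc _
    have h2 := usc_min_const (usc_max_const h1 0) s
    simpa [rclamp, sub_eq_add_neg] using h2
  · exact lsc_min_const (lsc_max_const hl'lsc 0) s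
  · exact fun z => rclamp_mono (hordu z)
  · exact fun z => rclamp_nonneg (le_of_lt hs) _
  · exact fun z => rclamp_le_s _
  · intro x y
    refine le_trans (rclamp_lip s _ _) ?_
    have : u' x - 5*γ - (u' y - 5*γ) = u' x - u' y := by ring
    rw [this]
    exact hu'lip x y
  · intro x y
    exact le_trans (rclamp_lip s _ _) (hl'lip x y)
  · intro z
    have h1 : rclamp s (ℓ' z) - rclamp s (u' z - 5*γ) ≤ |ℓ' z - (u' z - 5*γ)| :=
      le_trans (le_abs_self _) (rclamp_lip s _ _)
    have h2 : |ℓ' z - (u' z - 5*γ)| = ℓ' z - u' z + 5*γ := by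
      rw [abs_of_nonneg (by have := hordu z; linarith)]
      ring
    have h3 : ℓ' z - u' z ≤ γ := by
      have := hl'h z; have := hu'g z; have := hhg z; linarith
    linarith
  · intro z
    have h1 : u z - 6*γ ≤ u' z - 5*γ := by
      have := hu'g z; have := hgu z; linarith
    have h2 : u z - 6*γ ≤ s := by
      have := hul z; have := hls z; linarith
    calc u z - 6*γ ≤ rclamp s (u z - 6*γ) := le_rclamp h2
      _ ≤ rclamp s (u' z - 5*γ) := rclamp_mono h1
  · intro z
    have h1 : ℓ' z ≤ ℓ z + 2*γ := by
      have := hl'h z; have := hhg z; have := hgl z; linarith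
    have h2 : (0:ℝ) ≤ ℓ z + 2*γ := by
      have := hu0 z; have := hul z; linarith
    calc rclamp s (ℓ' z) ≤ rclamp s (ℓ z + 2*γ) := rclamp_mono h1
      _ ≤ ℓ z + 2*γ := rclamp_le_self h2

end TopometricOn
namespace TopometricOn

variable {Z : Type*} [TopologicalSpace Z] (S : TopometricOn Z)

set_option maxHeartbeats 1600000 in
theorem sandwich [CompactSpace Z] [Nonempty Z]
    {u ℓ : Z → ℝ} {s ε : ℝ} (hs : 0 < s) (hε : 0 < ε) (hε1 : ε ≤ 1)
    (hu : UpperSemicontinuous u) (hl : LowerSemicontinuous ℓ)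
    (hul : ∀ z, u z ≤ ℓ z) (hu0 : ∀ z, 0 ≤ u z) (hls : ∀ z, ℓ z ≤ s)
    (huLip : ∀ a b, |u a - u b| ≤ S.rD (ENNReal.ofReal (s+1)) a b)
    (hlLip : ∀ a b, |ℓ a - ℓ b| ≤ S.rD (ENNReal.ofReal (s+1)) a b) :
    ∃ f : Z → ℝ, Continuous f ∧ (∀ a b, |f a - f b| ≤ S.rD (ENNReal.ofReal (s+1)) a b) ∧
      (∀ z, u z - 12*ε ≤ f z) ∧ (∀ z, f z ≤ ℓ z + 4*ε) ∧ (∀ z, 0 ≤ f z ∧ f z ≤ s) := by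
  classical
  set B : ℝ≥0∞ := ENNReal.ofReal (s+1) with hBdef
  set P : (Z → ℝ) → (Z → ℝ) → Prop := fun u' ℓ' =>
    UpperSemicontinuous u' ∧ LowerSemicontinuous ℓ' ∧ (∀ z, u' z ≤ ℓ' z) ∧
    (∀ z, 0 ≤ u' z) ∧ (∀ z, ℓ' z ≤ s) ∧
    (∀ a b, |u' a - u' b| ≤ S.rD B a b) ∧ (∀ a b, |ℓ' a - ℓ' b| ≤ S.rD B a b) with hPdef
  set γ : ℕ → ℝ := fun n => ε * (1/2)^n with hγdef
  have hγpos : ∀ n, 0 < γ n := fun n => by positivity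
  have hγle1 : ∀ n, γ n ≤ 1 := by
    intro n
    have h1 : (1/2 : ℝ)^n ≤ 1 := pow_le_one₀ (by norm_num) (by norm_num)
    have : γ n = ε * (1/2)^n := rfl
    nlinarith
  have hP0 : P u ℓ := ⟨hu, hl, hul, hu0, hls, huLip, hlLip⟩
  have key2 : ∀ np : ℕ × {q : (Z → ℝ) × (Z → ℝ) // P q.1 q.2},
      ∃ q : {q : (Z → ℝ) × (Z → ℝ) // P q.1 q.2},
        (∀ z, q.1.2 z - q.1.1 z ≤ 6 * γ np.1) ∧
        (∀ z, np.2.1.1 z - 6 * γ np.1 ≤ q.1.1 z) ∧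
        (∀ z, q.1.2 z ≤ np.2.1.2 z + 2 * γ np.1) := by
    rintro ⟨n, ⟨⟨u', ℓ'⟩, hP⟩⟩
    obtain ⟨h1, h2, h3, h4, h5, h6, h7⟩ := hP
    obtain ⟨u₁, ℓ₁, g1, g2, g3, g4, g5, g6, g7, g8, g9, g10⟩ :=
      S.step_lemma (hγpos n) (hγle1 n) hs h1 h2 h3 h4 h5 h6 h7
    exact ⟨⟨(u₁, ℓ₁), ⟨g1, g2, g3, g4, g5, g6, g7⟩⟩, g8, g9, g10⟩
  choose T hT1 hT2 hT3 using key2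
  set seq : ℕ → {q : (Z → ℝ) × (Z → ℝ) // P q.1 q.2} :=
    fun n => Nat.rec ⟨(u, ℓ), hP0⟩ (fun n p => T (n, p)) n with hseqdef
  have hseq0 : seq 0 = ⟨(u, ℓ), hP0⟩ := rfl
  have hseqS : ∀ n, seq (n+1) = T (n, seq n) := fun n => rfl
  set uN : ℕ → Z → ℝ := fun n => (seq n).1.1 with huNdef
  set lN : ℕ → Z → ℝ := fun n => (seq n).1.2 with hlNdef
  have huN0 : uN 0 = u := rfl
  have hlN0 : lN 0 = ℓ := rfl
  have hPn : ∀ n, P (uN n) (lN n) := fun n => (seq n).2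
  have hgap : ∀ n z, lN (n+1) z - uN (n+1) z ≤ 6 * γ n := by
    intro n z
    have := hT1 (n, seq n) z
    rwa [← hseqS n] at this
  have hlow : ∀ n z, uN n z - 6 * γ n ≤ uN (n+1) z := by
    intro n z
    have := hT2 (n, seq n) z
    rwa [← hseqS n] at this
  have hup : ∀ n z, lN (n+1) z ≤ lN n z + 2 * γ n := by
    intro n z
    have := hT3 (n, seq n) z
    rwa [← hseqS n] at this
  have hgapall : ∀ n z, lN n z - uN n z ≤ (s + 12*ε) * (1/2)^n := by
    intro n z
    cases n with
    | zero =>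
      have h1 := hls z
      have h2 := hu0 z
      rw [huN0, hlN0]
      simp only [pow_zero]
      nlinarith
    | succ n =>
      have h1 := hgap n z
      have h2 : 6 * γ n = 12 * ε * (1/2)^(n+1) := by
        simp only [hγdef]
        rw [pow_succ]
        ring
      nlinarith [pow_pos (by norm_num : (0:ℝ) < 1/2) (n+1), hs]
  set C : ℝ := 2 * (s + 18 * ε) with hCdef
  have hC0 : 0 < C := by simp only [hCdef]; nlinarith
  have hcauchyb : ∀ z n, dist (uN n z) (uN (n+1) z) ≤ C / 2 / 2^n := by
    intro z n
    rw [Real.dist_eq]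
    have hpow : (1/2 : ℝ)^n = 1 / 2^n := by rw [one_div_pow]
    have h1 := hlow n z
    have h2 : uN (n+1) z ≤ uN n z + (s + 12*ε) * (1/2)^n + 2 * γ n := by
      have h3 := (hPn (n+1)).2.2.1 z
      have h4 := hup n z
      have h5 := hgapall n z
      linarith
    have h6 : C / 2 / 2^n = (s + 18*ε) * (1/2)^n := by
      rw [hpow, hCdef]; ring
    rw [h6, abs_le]
    have h7 : 6 * γ n ≤ (s + 18*ε) * (1/2)^n := by
      simp only [hγdef]
      nlinarith [pow_pos (by norm_num : (0:ℝ) < 1/2) n, hs]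
    have h8 : (s + 12*ε) * (1/2)^n + 2 * γ n ≤ (s + 18*ε) * (1/2)^n := by
      simp only [hγdef]
      nlinarith [pow_pos (by norm_num : (0:ℝ) < 1/2) n]
    constructor
    · linarith
    · linarith
  have hcauchy : ∀ z : Z, CauchySeq (fun n => uN n z) :=
    fun z => cauchySeq_of_le_geometric_two (hcauchyb z)
  have hex : ∀ z : Z, ∃ l : ℝ, Filter.Tendsto (fun n => uN n z) Filter.atTop (nhds l) :=
    fun z => cauchySeq_tendsto_of_complete (hcauchy z)
  set f : Z → ℝ := fun z => Classical.choose (hex z) with hfdef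
  have hf : ∀ z, Filter.Tendsto (fun n => uN n z) Filter.atTop (nhds (f z)) :=
    fun z => Classical.choose_spec (hex z)
  have hdistf : ∀ z n, dist (uN n z) (f z) ≤ C / 2^n :=
    fun z n => dist_le_of_le_geometric_two_of_tendsto (hcauchyb z) (hf z) n
  -- uniform approximation of f by uN and lN
  have happroxu : ∀ ε' : ℝ, 0 < ε' → ∃ n, ∀ z, |f z - uN n z| ≤ ε' := by
    intro ε' hε'
    obtain ⟨n, hn⟩ := exists_pow_lt_of_lt_one (div_pos hε' hC0) (by norm_num : (1/2:ℝ) < 1)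
    refine ⟨n, fun z => ?_⟩
    have h1 := hdistf z n
    rw [dist_comm, Real.dist_eq] at h1
    have h2 : C / 2^n = C * (1/2)^n := by rw [one_div_pow]; ring
    have h3 : C * (1/2)^n < ε' := by
      have h4 := (lt_div_iff₀ hC0).1 hn
      nlinarith
    linarith
  have happroxl : ∀ ε' : ℝ, 0 < ε' → ∃ n, ∀ z, |f z - lN n z| ≤ ε' := by
    intro ε' hε'
    set C' : ℝ := C + s + 12*ε with hC'def
    have hC'0 : 0 < C' := by simp only [hC'def]; nlinarith
    obtain ⟨n, hn⟩ := exists_pow_lt_of_lt_one (div_pos hε' hC'0) (by norm_num : (1/2:ℝ) < 1)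
    refine ⟨n, fun z => ?_⟩
    have h1 := hdistf z n
    rw [dist_comm, Real.dist_eq] at h1
    have h2 : C / 2^n = C * (1/2)^n := by rw [one_div_pow]; ring
    have h3 := hgapall n z
    have h4 := (hPn n).2.2.1 z
    have h5 : C' * (1/2)^n < ε' := by
      have h9 := (lt_div_iff₀ hC'0).1 hn
      nlinarith
    have h6 : |f z - lN n z| ≤ |f z - uN n z| + (lN n z - uN n z) := by
      cases abs_cases (f z - uN n z) with
      | inl h => cases abs_cases (f z - lN n z) with
        | inl h' => nlinarith [h.1, h'.1]
        | inr h' => nlinarith [h.1, h'.1]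
      | inr h => cases abs_cases (f z - lN n z) with
        | inl h' => nlinarith [h.1, h'.1]
        | inr h' => nlinarith [h.1, h'.1]
    calc |f z - lN n z| ≤ |f z - uN n z| + (lN n z - uN n z) := h6
      _ ≤ C * (1/2)^n + (s + 12*ε) * (1/2)^n := by
          rw [← h2]
          have : |f z - uN n z| ≤ C / 2^n := h1
          linarith
      _ = C' * (1/2)^n := by rw [hC'def]; ring
      _ ≤ ε' := le_of_lt h5
  -- properties of f
  have hfusc : UpperSemicontinuous f :=
    usc_of_uniform_approx (fun n => (hPn n).1) happroxu
  have hflsc : LowerSemicontinuous f :=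
    lsc_of_uniform_approx (fun n => (hPn n).2.1) happroxl
  have hfcont : Continuous f := continuous_iff_lower_upperSemicontinuous.2 ⟨hflsc, hfusc⟩
  have hflip : ∀ a b, |f a - f b| ≤ S.rD B a b := by
    intro a b
    have htend : Filter.Tendsto (fun n => |uN n a - uN n b|) Filter.atTop
        (nhds |f a - f b|) := ((hf a).sub (hf b)).abs
    exact le_of_tendsto htend (Filter.Eventually.of_forall fun n => (hPn n).2.2.2.2.2.1 a b)
  have hlowall : ∀ n z, u z - 12*ε*(1 - (1/2)^n) ≤ uN n z := by
    intro n
    induction n with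
    | zero => intro z; rw [huN0]; simp
    | succ n ih =>
      intro z
      have h1 := hlow n z
      have h2 := ih z
      have e3 : 12*ε*(1 - (1/2)^n) = 12*ε - 12*γ n := by simp only [hγdef]; ring
      have e4 : 12*ε*(1 - (1/2)^(n+1)) = 12*ε - 6*γ n := by
        simp only [hγdef]; rw [pow_succ]; ring
      rw [e4]; rw [e3] at h2
      linarith
  have hfges : ∀ z, u z - 12*ε ≤ f z := by
    intro z
    refine ge_of_tendsto (hf z) (Filter.Eventually.of_forall fun n => ?_)
    have h1 := hlowall n z
    have h2 : (0:ℝ) ≤ (1/2)^n := by positivity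
    nlinarith [mul_nonneg (le_of_lt hε) h2]
  have hupall : ∀ n z, lN n z ≤ ℓ z + 4*ε*(1 - (1/2)^n) := by
    intro n
    induction n with
    | zero => intro z; rw [hlN0]; simp
    | succ n ih =>
      intro z
      have h1 := hup n z
      have h2 := ih z
      have e5 : 4*ε*(1 - (1/2)^n) = 4*ε - 4*γ n := by simp only [hγdef]; ring
      have e6 : 4*ε*(1 - (1/2)^(n+1)) = 4*ε - 2*γ n := by
        simp only [hγdef]; rw [pow_succ]; ring
      rw [e6]; rw [e5] at h2
      linarith
  have hfles : ∀ z, f z ≤ ℓ z + 4*ε := by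
    intro z
    refine le_of_tendsto (hf z) (Filter.Eventually.of_forall fun n => ?_)
    have h1 := (hPn n).2.2.1 z
    have h2 := hupall n z
    have h3 : (0:ℝ) ≤ (1/2)^n := by positivity
    nlinarith [mul_nonneg (le_of_lt hε) h3]
  refine ⟨f, hfcont, hflip, hfges, hfles, fun z => ⟨?_, ?_⟩⟩
  · refine ge_of_tendsto (hf z) (Filter.Eventually.of_forall fun n => (hPn n).2.2.2.1 z)
  · refine le_of_tendsto (hf z) (Filter.Eventually.of_forall fun n => ?_)
    exact le_trans ((hPn n).2.2.1 z) ((hPn n).2.2.2.2.1 z)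

end TopometricOn
theorem complex_edist_ofReal (a b : ℝ) : edist (a:ℂ) (b:ℂ) = ENNReal.ofReal |a - b| := by
  rw [edist_dist]
  congr 1
  rw [Complex.dist_eq, ← Complex.ofReal_sub, Complex.norm_real, Real.norm_eq_abs]

theorem trunc_add_ge {s : ℝ} (hs : 0 ≤ s) {v w : ℝ≥0∞} (h : ENNReal.ofReal s ≤ v + w) :
    s ≤ trunc s v + trunc s w := by
  rcases le_or_gt (ENNReal.ofReal s) v with hv | hv
  · rw [trunc_eq_of_le hs hv]
    have := trunc_nonneg s w
    linarith
  · rcases le_or_gt (ENNReal.ofReal s) w with hw | hw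
    · rw [trunc_eq_of_le hs hw]
      have := trunc_nonneg s v
      linarith
    · have hvt : v ≠ ⊤ := fun hv' => by simp [hv'] at hv
      have hwt : w ≠ ⊤ := fun hw' => by simp [hw'] at hw
      have h1 : trunc s v = v.toReal := by rw [trunc, min_eq_left (le_of_lt hv)]
      have h2 : trunc s w = w.toReal := by rw [trunc, min_eq_left (le_of_lt hw)]
      rw [h1, h2]
      have h3 : (ENNReal.ofReal s).toReal ≤ (v + w).toReal :=
        ENNReal.toReal_mono (ENNReal.add_ne_top.2 ⟨hvt, hwt⟩) h
      rw [ENNReal.toReal_ofReal hs, ENNReal.toReal_add hvt hwt] at h3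
      exact h3

namespace TopometricOn

variable {Z : Type*} [TopologicalSpace Z] (S : TopometricOn Z)

/-- Main separation lemma on a compact topometric space: functions witnessing the distance. -/
theorem exists_lip_map_pair [CompactSpace Z] {x y : Z} {r : ℝ≥0∞} (hr : r < S.d x y) :
    ∃ f : Z → ℂ, Continuous f ∧ (∀ a b, edist (f a) (f b) ≤ S.d a b) ∧
      r ≤ edist (f x) (f y) := by
  haveI : T2Space Z := S.t2
  haveI : Nonempty Z := ⟨x⟩
  have hrt : r ≠ ⊤ := hr.ne_top |> fun h => ne_top_of_lt hr
  set s : ℝ := if S.d x y = ⊤ then r.toReal + 1 else (S.d x y).toReal with hsdef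
  have hsd : ENNReal.ofReal s ≤ S.d x y := by
    rcases eq_or_ne (S.d x y) ⊤ with h | h
    · rw [h]; exact le_top
    · rw [hsdef, if_neg h, ENNReal.ofReal_toReal h]
  have hrs : r.toReal < s := by
    rcases eq_or_ne (S.d x y) ⊤ with h | h
    · rw [hsdef, if_pos h]; linarith
    · rw [hsdef, if_neg h]
      exact ENNReal.toReal_strict_mono h hr
  have hs : 0 < s := lt_of_le_of_lt ENNReal.toReal_nonneg hrs
  set δ : ℝ := s - r.toReal with hδdef
  have hδ : 0 < δ := by simp only [hδdef]; linarith
  set ε : ℝ := min (δ/16) 1 with hεdef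
  have hε : 0 < ε := lt_min (by positivity) one_pos
  have hε1 : ε ≤ 1 := min_le_right _ _
  have hεδ : 16 * ε ≤ δ := by
    have : ε ≤ δ/16 := min_le_left _ _
    linarith
  set u : Z → ℝ := fun z => s - trunc s (S.ptD z {y}) with hudef
  set ℓ : Z → ℝ := fun z => trunc s (S.ptD z {x}) with hldef
  have hptx : ∀ z, S.ptD z {x} = S.d z x := fun z => by simp [ptD]
  have hpty : ∀ z, S.ptD z {y} = S.d z y := fun z => by simp [ptD]
  have husc : UpperSemicontinuous u :=
    usc_const_sub (S.lsc_trunc_ptD isClosed_singleton s) s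
  have hlsc : LowerSemicontinuous ℓ := S.lsc_trunc_ptD isClosed_singleton s
  have hul : ∀ z, u z ≤ ℓ z := by
    intro z
    have h1 : ENNReal.ofReal s ≤ S.ptD z {x} + S.ptD z {y} := by
      rw [hptx, hpty]
      refine le_trans hsd (le_trans (S.d_triangle x z y) ?_)
      rw [S.d_symm x z]
    have := trunc_add_ge (le_of_lt hs) h1
    simp only [hudef, hldef]
    linarith
  have hu0 : ∀ z, 0 ≤ u z := fun z => by
    have := trunc_le s (le_of_lt hs) (S.ptD z {y})
    simp only [hudef]
    linarith
  have hls : ∀ z, ℓ z ≤ s := fun z => trunc_le s (le_of_lt hs) _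
  have huLip : ∀ a b, |u a - u b| ≤ S.rD (ENNReal.ofReal (s+1)) a b := by
    intro a b
    have h1 := S.trunc_ptD_lip (le_of_lt hs) ({y} : Set Z) a b
    have h2 : u a - u b = -(trunc s (S.ptD a {y}) - trunc s (S.ptD b {y})) := by
      simp only [hudef]; ring
    rw [h2, abs_neg]
    exact h1
  have hlLip : ∀ a b, |ℓ a - ℓ b| ≤ S.rD (ENNReal.ofReal (s+1)) a b :=
    fun a b => S.trunc_ptD_lip (le_of_lt hs) ({x} : Set Z) a b
  obtain ⟨f₀, hf₀c, hf₀lip, hf₀low, hf₀up, hf₀bd⟩ :=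
    S.sandwich hs hε hε1 husc hlsc hul hu0 hls huLip hlLip
  refine ⟨fun z => (f₀ z : ℂ), Complex.continuous_ofReal.comp hf₀c, ?_, ?_⟩
  · intro a b
    rw [complex_edist_ofReal]
    exact S.ofReal_abs_le_d hf₀lip a b
  · rw [complex_edist_ofReal]
    have hx1 : f₀ x ≤ 4*ε := by
      have h1 := hf₀up x
      have h2 : ℓ x = 0 := by
        simp only [hldef, hptx, S.d_self, trunc_zero]
      linarith
    have hy1 : s - 12*ε ≤ f₀ y := by
      have h1 := hf₀low y
      have h2 : u y = s := by
        simp only [hudef, hpty, S.d_self, trunc_zero]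
        ring
      linarith
    have habs : r.toReal ≤ |f₀ x - f₀ y| := by
      have h1 : f₀ y - f₀ x ≥ s - 16*ε := by linarith
      have h2 : s - 16*ε ≥ r.toReal := by
        simp only [hδdef] at hεδ
        linarith
      calc r.toReal ≤ f₀ y - f₀ x := by linarith
        _ ≤ |f₀ x - f₀ y| := by rw [abs_sub_comm]; exact le_abs_self _
    calc r = ENNReal.ofReal r.toReal := (ENNReal.ofReal_toReal (ne_top_of_lt hr)).symm
      _ ≤ ENNReal.ofReal |f₀ x - f₀ y| := ENNReal.ofReal_le_ofReal habs

/-- Separation of a point from a closed set in a compact topometric space. -/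
theorem exists_lip_sep [CompactSpace Z] {F : Set Z} (hF : IsClosed F) {x : Z} (hx : x ∉ F) :
    ∃ f : Z → ℂ, Continuous f ∧ (∀ a b, edist (f a) (f b) ≤ S.d a b) ∧
      ∃ t : ℂ, (∀ y ∈ F, f y = t) ∧ f x ≠ t := by
  haveI : T2Space Z := S.t2
  haveI : Nonempty Z := ⟨x⟩
  obtain ⟨ε₀, hε₀, hball⟩ := S.refines Fᶜ hF.isOpen_compl x hx
  have hdF : ∀ y ∈ F, ε₀ ≤ S.d x y := by
    intro y hy
    by_contra hlt
    exact (hball y (not_le.1 hlt)) hy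
  have hptDF : ε₀ ≤ S.ptD x F := S.le_ptD hdF
  set s : ℝ := if ε₀ = ⊤ then 1 else ε₀.toReal with hsdef
  have hs : 0 < s := by
    rcases eq_or_ne ε₀ ⊤ with h | h
    · rw [hsdef, if_pos h]; norm_num
    · rw [hsdef, if_neg h]
      exact ENNReal.toReal_pos (ne_of_gt hε₀) h
  have hofs : ENNReal.ofReal s ≤ ε₀ := by
    rcases eq_or_ne ε₀ ⊤ with h | h
    · rw [h]; exact le_top
    · rw [hsdef, if_neg h, ENNReal.ofReal_toReal h]
  set ε : ℝ := min (s/100) 1 with hεdef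
  have hε : 0 < ε := lt_min (by positivity) one_pos
  have hε1 : ε ≤ 1 := min_le_right _ _
  have hεs : 100 * ε ≤ s := by
    have : ε ≤ s/100 := min_le_left _ _
    linarith
  set u : Z → ℝ := fun z => s - trunc s (S.ptD z F) with hudef
  set ℓ : Z → ℝ := fun z => trunc s (S.ptD z {x}) with hldef
  have hptx : ∀ z, S.ptD z {x} = S.d z x := fun z => by simp [ptD]
  have husc : UpperSemicontinuous u := usc_const_sub (S.lsc_trunc_ptD hF s) s
  have hlsc : LowerSemicontinuous ℓ := S.lsc_trunc_ptD isClosed_singleton s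
  have hul : ∀ z, u z ≤ ℓ z := by
    intro z
    have h1 : ENNReal.ofReal s ≤ S.ptD z {x} + S.ptD z F := by
      rw [hptx]
      refine le_trans (le_trans hofs hptDF) (le_trans (S.ptD_triangle x z F) ?_)
      rw [S.d_symm x z]
    have := trunc_add_ge (le_of_lt hs) h1
    simp only [hudef, hldef]
    linarith
  have hu0 : ∀ z, 0 ≤ u z := fun z => by
    have := trunc_le s (le_of_lt hs) (S.ptD z F)
    simp only [hudef]; linarith
  have hls : ∀ z, ℓ z ≤ s := fun z => trunc_le s (le_of_lt hs) _
  have huLip : ∀ a b, |u a - u b| ≤ S.rD (ENNReal.ofReal (s+1)) a b := by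
    intro a b
    have h1 := S.trunc_ptD_lip (le_of_lt hs) F a b
    have h2 : u a - u b = -(trunc s (S.ptD a F) - trunc s (S.ptD b F)) := by
      simp only [hudef]; ring
    rw [h2, abs_neg]
    exact h1
  have hlLip : ∀ a b, |ℓ a - ℓ b| ≤ S.rD (ENNReal.ofReal (s+1)) a b :=
    fun a b => S.trunc_ptD_lip (le_of_lt hs) ({x} : Set Z) a b
  obtain ⟨f₀, hf₀c, hf₀lip, hf₀low, hf₀up, hf₀bd⟩ :=
    S.sandwich hs hε hε1 husc hlsc hul hu0 hls huLip hlLip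
  set t₀ : ℝ := s - 12*ε with ht₀def
  set g : Z → ℝ := fun z => min (f₀ z) t₀ with hgdef
  have hgc : Continuous g := hf₀c.min continuous_const
  have hglip : ∀ a b, |g a - g b| ≤ S.rD (ENNReal.ofReal (s+1)) a b := fun a b =>
    le_trans (abs_min_const_sub _ _ _) (hf₀lip a b)
  refine ⟨fun z => (g z : ℂ), Complex.continuous_ofReal.comp hgc, ?_, (t₀ : ℂ), ?_, ?_⟩
  · intro a b
    rw [complex_edist_ofReal]
    exact S.ofReal_abs_le_d hglip a b
  · intro y hy
    have h1 : u y = s := by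
      simp only [hudef, S.ptD_eq_zero hy, trunc_zero]
      ring
    have h2 : t₀ ≤ f₀ y := by
      have := hf₀low y
      rw [h1] at this
      simp only [ht₀def]
      linarith
    have h3 : g y = t₀ := min_eq_right h2
    show ((g y : ℝ) : ℂ) = (t₀ : ℂ)
    rw [h3]
  · have h1 : ℓ x = 0 := by simp only [hldef, hptx, S.d_self, trunc_zero]
    have h2 : f₀ x ≤ 4*ε := by
      have := hf₀up x
      rw [h1] at this
      linarith
    have h3 : g x ≤ 4*ε := le_trans (min_le_left _ _) h2
    have h4 : g x < t₀ := by
      simp only [ht₀def]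
      linarith
    intro hcontra
    have h5 : g x = t₀ := Complex.ofReal_inj.1 hcontra
    rw [h5] at h4
    exact lt_irrefl _ h4

end TopometricOn
namespace OnePointD

open OnePoint

/-- Extended distance on the one-point compactification of `ℂ`. -/
noncomputable def pD : OnePoint ℂ → OnePoint ℂ → ℝ≥0∞ := fun a b =>
  match a, b with
  | ∞, ∞ => 0
  | ∞, OnePoint.some _ => ⊤
  | OnePoint.some _, ∞ => ⊤
  | OnePoint.some a, OnePoint.some b => edist a b

@[simp] theorem pD_infty_infty : pD ∞ ∞ = 0 := rfl
@[simp] theorem pD_infty_coe (a : ℂ) : pD ∞ (OnePoint.some a) = ⊤ := rfl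
@[simp] theorem pD_coe_infty (a : ℂ) : pD (OnePoint.some a) ∞ = ⊤ := rfl
@[simp] theorem pD_coe_coe (a b : ℂ) : pD (OnePoint.some a) (OnePoint.some b) = edist a b := rfl

theorem pD_self (a : OnePoint ℂ) : pD a a = 0 := by
  induction a using OnePoint.rec with
  | infty => rfl
  | coe a => simp

theorem pD_eq_zero {a b : OnePoint ℂ} (h : pD a b = 0) : a = b := by
  induction a using OnePoint.rec with
  | infty =>
    induction b using OnePoint.rec with
    | infty => rfl
    | coe b => simp at h
  | coe a =>
    induction b using OnePoint.rec with
    | infty => simp at h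
    | coe b =>
      simp only [pD_coe_coe, edist_eq_zero] at h
      rw [h]

theorem pD_symm (a b : OnePoint ℂ) : pD a b = pD b a := by
  induction a using OnePoint.rec with
  | infty =>
    induction b using OnePoint.rec with
    | infty => rfl
    | coe b => simp
  | coe a =>
    induction b using OnePoint.rec with
    | infty => simp
    | coe b => simp [edist_comm]

theorem pD_triangle (a b c : OnePoint ℂ) : pD a c ≤ pD a b + pD b c := by
  induction a using OnePoint.rec with
  | infty =>
    induction b using OnePoint.rec with
    | infty => simp
    | coe b =>
      induction c using OnePoint.rec with
      | infty => simp
      | coe c => simp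
  | coe a =>
    induction b using OnePoint.rec with
    | infty =>
      induction c using OnePoint.rec with
      | infty => simp
      | coe c => simp
    | coe b =>
      induction c using OnePoint.rec with
      | infty => simp
      | coe c =>
        simp only [pD_coe_coe]
        exact edist_triangle a b c

theorem lsc_pD : LowerSemicontinuous fun p : OnePoint ℂ × OnePoint ℂ => pD p.1 p.2 := by
  rintro ⟨a, b⟩ c hc
  dsimp only at hc
  induction a using OnePoint.rec with
  | infty =>
    induction b using OnePoint.rec with
    | infty => simp at hc
    | coe b =>
      -- pD = ⊤
      have hct : c ≠ ⊤ := by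
        simp only [pD_infty_coe] at hc
        exact hc.ne
      set R : ℝ := ‖b‖ + 1 + c.toReal with hR
      have hNinf : (OnePoint.some '' (Metric.closedBall (0:ℂ) R)ᶜ) ∪ {(∞ : OnePoint ℂ)} ∈
          nhds (∞ : OnePoint ℂ) :=
        OnePoint.hasBasis_nhds_infty.mem_of_mem ⟨Metric.isClosed_closedBall, isCompact_closedBall _ _⟩
      have hNb : (OnePoint.some '' Metric.ball b 1) ∈ nhds (OnePoint.some b) := by
        refine (OnePoint.isOpenEmbedding_coe.isOpenMap _ Metric.isOpen_ball).mem_nhds ?_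
        exact ⟨b, Metric.mem_ball_self one_pos, rfl⟩
      rw [nhds_prod_eq]
      filter_upwards [Filter.prod_mem_prod hNinf hNb] with p hp
      obtain ⟨hp1, hp2⟩ := hp
      obtain ⟨y, hy, hyeq⟩ := hp2
      rcases hp1 with ⟨x, hx, hxeq⟩ | hp1
      · rw [← hxeq, ← hyeq, pD_coe_coe]
        simp only [Set.mem_compl_iff, Metric.mem_closedBall, dist_zero_right, not_le] at hx
        rw [Metric.mem_ball] at hy
        have hd : c.toReal < dist x y := by
          have h1 : ‖x‖ - ‖y‖ ≤ dist x y := by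
            have := norm_sub_norm_le x y
            rwa [← dist_eq_norm] at this
          have h2 : ‖y‖ ≤ ‖b‖ + 1 := by
            have := dist_triangle y b 0
            simp only [dist_zero_right] at this
            have h3 : dist y b < 1 := hy
            calc ‖y‖ ≤ dist y b + ‖b‖ := this
              _ ≤ ‖b‖ + 1 := by linarith
          simp only [hR] at hx
          linarith
        calc c = ENNReal.ofReal c.toReal := (ENNReal.ofReal_toReal hct).symm
          _ < ENNReal.ofReal (dist x y) :=
              (ENNReal.ofReal_lt_ofReal_iff
                (lt_of_le_of_lt ENNReal.toReal_nonneg hd)).2 hd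
          _ = edist x y := (edist_dist x y).symm
      · have h9 : p.1 = (∞ : OnePoint ℂ) := hp1
        rw [h9, ← hyeq, pD_infty_coe]
        exact lt_top_iff_ne_top.2 hct
  | coe a =>
    induction b using OnePoint.rec with
    | infty =>
      have hct : c ≠ ⊤ := by
        simp only [pD_coe_infty] at hc
        exact hc.ne
      set R : ℝ := ‖a‖ + 1 + c.toReal with hR
      have hNinf : (OnePoint.some '' (Metric.closedBall (0:ℂ) R)ᶜ) ∪ {(∞ : OnePoint ℂ)} ∈
          nhds (∞ : OnePoint ℂ) :=
        OnePoint.hasBasis_nhds_infty.mem_of_mem ⟨Metric.isClosed_closedBall, isCompact_closedBall _ _⟩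
      have hNa : (OnePoint.some '' Metric.ball a 1) ∈ nhds (OnePoint.some a) := by
        refine (OnePoint.isOpenEmbedding_coe.isOpenMap _ Metric.isOpen_ball).mem_nhds ?_
        exact ⟨a, Metric.mem_ball_self one_pos, rfl⟩
      rw [nhds_prod_eq]
      filter_upwards [Filter.prod_mem_prod hNa hNinf] with p hp
      obtain ⟨hp1, hp2⟩ := hp
      obtain ⟨x, hx, hxeq⟩ := hp1
      rcases hp2 with ⟨y, hy, hyeq⟩ | hp2
      · rw [← hxeq, ← hyeq, pD_coe_coe]
        simp only [Set.mem_compl_iff, Metric.mem_closedBall, dist_zero_right, not_le] at hy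
        rw [Metric.mem_ball] at hx
        have hd : c.toReal < dist x y := by
          have h1 : ‖y‖ - ‖x‖ ≤ dist x y := by
            have := norm_sub_norm_le y x
            rwa [← dist_eq_norm, dist_comm] at this
          have h2 : ‖x‖ ≤ ‖a‖ + 1 := by
            have := dist_triangle x a 0
            simp only [dist_zero_right] at this
            have h3 : dist x a < 1 := hx
            calc ‖x‖ ≤ dist x a + ‖a‖ := this
              _ ≤ ‖a‖ + 1 := by linarith
          simp only [hR] at hy
          linarith
        calc c = ENNReal.ofReal c.toReal := (ENNReal.ofReal_toReal hct).symm
          _ < ENNReal.ofReal (dist x y) :=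
              (ENNReal.ofReal_lt_ofReal_iff
                (lt_of_le_of_lt ENNReal.toReal_nonneg hd)).2 hd
          _ = edist x y := (edist_dist x y).symm
      · have h9 : p.2 = (∞ : OnePoint ℂ) := hp2
        rw [← hxeq, h9, pD_coe_infty]
        exact lt_top_iff_ne_top.2 hct
    | coe b =>
      simp only [pD_coe_coe] at hc
      have hA : IsOpen {p : ℂ × ℂ | c < edist p.1 p.2} :=
        isOpen_lt continuous_const continuous_edist
      have hmem : (a, b) ∈ {p : ℂ × ℂ | c < edist p.1 p.2} := hc
      rw [nhds_prod_eq, OnePoint.nhds_coe_eq, OnePoint.nhds_coe_eq,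
        Filter.prod_map_map_eq]
      rw [Filter.eventually_map]
      rw [← nhds_prod_eq]
      filter_upwards [hA.mem_nhds hmem] with q hq
      exact hq

theorem pD_refines (a : OnePoint ℂ) (u : Set (OnePoint ℂ)) (hu : IsOpen u) (ha : a ∈ u) :
    ∃ ε > (0:ℝ≥0∞), ∀ b, pD a b < ε → b ∈ u := by
  induction a using OnePoint.rec with
  | infty =>
    refine ⟨1, one_pos, fun b hb => ?_⟩
    induction b using OnePoint.rec with
    | infty => exact ha
    | coe b =>
      simp only [pD_infty_coe] at hb
      exact absurd hb (by simp)
  | coe a =>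
    have hopen : IsOpen (OnePoint.some ⁻¹' u) := hu.preimage OnePoint.continuous_coe
    have hmem : a ∈ OnePoint.some ⁻¹' u := ha
    obtain ⟨ε, hε, hball⟩ := EMetric.isOpen_iff.1 hopen a hmem
    refine ⟨ε, hε, fun b hb => ?_⟩
    induction b using OnePoint.rec with
    | infty =>
      simp only [pD_coe_infty] at hb
      exact absurd hb (by simp)
    | coe b =>
      simp only [pD_coe_coe] at hb
      have : b ∈ Metric.eball a ε := by
        rw [Metric.mem_eball, edist_comm]
        exact hb
      exact hball this

end OnePointD
/-- a topometric space admits a topometric compactification iff it is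
completely regular. -/
theorem compactification_iff_isCompletelyRegular {X : Type u} [TopologicalSpace X]
    (T : TopometricOn X) :
    (∃ (Z : Type u) (_ : TopologicalSpace Z) (_ : CompactSpace Z) (S : TopometricOn Z)
        (θ : X → Z), Topology.IsEmbedding θ ∧ ∀ x y : X, S.d (θ x) (θ y) = T.d x y) ↔
      T.IsCompletelyRegular := by
  constructor
  · rintro ⟨Z, _, _, S, θ, hemb, hiso⟩
    constructor
    · intro F hF x hx
      have hclo : θ x ∉ closure (θ '' F) := by
        intro hmem
        have h1 : x ∈ closure F := by
          rw [hemb.toIsInducing.closure_eq_preimage_closure_image F]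
          exact hmem
        rw [hF.closure_eq] at h1
        exact hx h1
      obtain ⟨g, hgc, hglip, t, hgt, hgx⟩ := S.exists_lip_sep isClosed_closure hclo
      exact ⟨fun z => g (θ z), hgc.comp hemb.continuous,
        fun a b => (hiso a b) ▸ hglip (θ a) (θ b), t,
        fun y hy => hgt (θ y) (subset_closure ⟨y, hy, rfl⟩), hgx⟩
    · intro x y
      refine le_antisymm ?_ (iSup_le fun f => f.2.2 x y)
      by_contra hlt
      push_neg at hlt
      obtain ⟨c, hc1, hc2⟩ := exists_between hlt
      have hcd : c < S.d (θ x) (θ y) := by rw [hiso]; exact hc2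
      obtain ⟨g, hgc, hglip, hgxy⟩ := S.exists_lip_map_pair hcd
      set ff : {f : X → ℂ // Continuous f ∧ ∀ a b, edist (f a) (f b) ≤ T.d a b} :=
        ⟨fun z => g (θ z), hgc.comp hemb.continuous,
          fun a b => (hiso a b) ▸ hglip (θ a) (θ b)⟩ with hffdef
      have h3 : c ≤ ⨆ f : {f : X → ℂ // Continuous f ∧ ∀ a b, edist (f a) (f b) ≤ T.d a b},
          edist (f.1 x) (f.1 y) :=
        le_trans hgxy (le_iSup (fun f : {f : X → ℂ //
          Continuous f ∧ ∀ a b, edist (f a) (f b) ≤ T.d a b} => edist (f.1 x) (f.1 y)) ff)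
      exact absurd (lt_of_le_of_lt h3 hc1) (lt_irrefl c)
  · intro hCR
    obtain ⟨hsep, hsup⟩ := hCR
    classical
    set I := {f : X → ℂ // Continuous f ∧ ∀ a b, edist (f a) (f b) ≤ T.d a b} with hIdef
    set ZC := I → OnePoint ℂ with hZCdef
    set SZ : TopometricOn ZC :=
      { d := fun z w => ⨆ i : I, OnePointD.pD (z i) (w i)
        d_self := fun z => by simp [OnePointD.pD_self]
        eq_of_d_eq_zero := fun z w h => funext fun i =>
          OnePointD.pD_eq_zero (by
            have h1 : ∀ j : I, OnePointD.pD (z j) (w j) = 0 := by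
              intro j
              have h2 := le_iSup (fun j : I => OnePointD.pD (z j) (w j)) j
              have h3 : (⨆ j : I, OnePointD.pD (z j) (w j)) = 0 := h
              rw [h3] at h2
              exact le_antisymm h2 zero_le
            exact h1 i)
        d_symm := fun z w => iSup_congr fun i => OnePointD.pD_symm _ _
        d_triangle := fun x y z => iSup_le fun i =>
          le_trans (OnePointD.pD_triangle (x i) (y i) (z i))
            (add_le_add (le_iSup (fun j : I => OnePointD.pD (x j) (y j)) i)
              (le_iSup (fun j : I => OnePointD.pD (y j) (z j)) i))
        lsc := lowerSemicontinuous_iSup fun i : I =>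
          by have := LowerSemicontinuous.comp OnePointD.lsc_pD
                ((((continuous_apply i).comp continuous_fst).prodMk
                  ((continuous_apply i).comp continuous_snd) :
                    Continuous fun p : ZC × ZC => (p.1 i, p.2 i))); exact this
        refines := by
          intro U hU z hz
          obtain ⟨Fi, us, hus, hsub⟩ := isOpen_pi_iff.1 hU z hz
          have key : ∀ i : I, ∃ ε : ℝ≥0∞, 0 < ε ∧
              (i ∈ Fi → ∀ b, OnePointD.pD (z i) b < ε → b ∈ us i) := by
            intro i
            by_cases hi : i ∈ Fi
            · obtain ⟨ε, hε, hb⟩ :=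
                OnePointD.pD_refines (z i) (us i) (hus i hi).1 (hus i hi).2
              exact ⟨ε, hε, fun _ => hb⟩
            · exact ⟨1, one_pos, fun h => absurd h hi⟩
          choose εf hεf0 hεf using key
          refine ⟨Fi.inf εf, ?_, fun w hw => ?_⟩
          · exact (Finset.lt_inf_iff (show (0:ℝ≥0∞) < ⊤ by simp)).2 fun i _ => hεf0 i
          · refine hsub ?_
            intro i hi
            simp only [Finset.mem_coe] at hi
            have h1 : OnePointD.pD (z i) (w i) < εf i :=
              lt_of_le_of_lt
                (le_trans (le_iSup (fun j : I => OnePointD.pD (z j) (w j)) i)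
                  (le_of_eq rfl))
                (lt_of_lt_of_le hw (Finset.inf_le hi))
            exact hεf i hi (w i) h1 } with hSZdef
    set θ : X → ZC := fun x => fun i : I => OnePoint.some (i.1 x) with hθdef
    have hcont : Continuous θ :=
      continuous_pi fun i => OnePoint.continuous_coe.comp i.2.1
    have hisoθ : ∀ x y : X, SZ.d (θ x) (θ y) = T.d x y := by
      intro x y
      have h1 : SZ.d (θ x) (θ y) = ⨆ i : I, edist (i.1 x) (i.1 y) :=
        iSup_congr fun i => by
          show OnePointD.pD (OnePoint.some (i.1 x)) (OnePoint.some (i.1 y)) = _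
          rw [OnePointD.pD_coe_coe]
      rw [h1, ← hsup x y]
    refine ⟨ZC, inferInstance, inferInstance, SZ, θ, ⟨?_, ?_⟩, hisoθ⟩
    · -- inducing
      refine Topology.IsInducing.mk (le_antisymm (continuous_iff_le_induced.1 hcont) ?_)
      rw [TopologicalSpace.le_def]
      intro U hU
      show IsOpen[TopologicalSpace.induced θ inferInstance] U
      have key : ∀ x : X, x ∈ U → ∃ V : Set ZC, IsOpen V ∧ θ x ∈ V ∧ θ ⁻¹' V ⊆ U := by
        intro x hx
        obtain ⟨f, hfc, hflip, t, hft, hfx⟩ :=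
          hsep Uᶜ (isClosed_compl_iff.2 hU) x (by simpa using hx)
        set i : I := ⟨f, hfc, hflip⟩ with hidef
        refine ⟨(fun z : ZC => z i) ⁻¹' (OnePoint.some '' ({t}ᶜ)), ?_, ?_, ?_⟩
        · exact (OnePoint.isOpenEmbedding_coe.isOpenMap _
            isOpen_compl_singleton).preimage (continuous_apply i)
        · exact ⟨f x, hfx, rfl⟩
        · intro y hy
          obtain ⟨w, hw, hweq⟩ := hy
          have h1 : w = f y := by
            have := OnePoint.coe_injective hweq
            exact this
          by_contra hyU
          have h2 : f y = t := hft y (by simpa using hyU)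
          rw [h1, h2] at hw
          exact hw rfl
      choose! W hW1 hW2 hW3 using key
      refine ⟨⋃ x ∈ U, W x, isOpen_biUnion fun x hx => hW1 x hx, ?_⟩
      ext y
      simp only [Set.mem_preimage, Set.mem_iUnion]
      constructor
      · rintro ⟨x, hx, hyW⟩
        exact hW3 x hx hyW
      · intro hy
        exact ⟨y, hy, hW2 y hy⟩
    · -- injective
      intro x y hxy
      by_contra hne
      have h0 : T.d x y ≠ 0 := fun h => hne (T.eq_of_d_eq_zero x y h)
      refine h0 ?_
      rw [hsup x y]
      have h1 : ∀ i : I, edist (i.1 x) (i.1 y) = 0 := by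
        intro i
        have h2 : θ x i = θ y i := congrFun hxy i
        have h3 : i.1 x = i.1 y := OnePoint.coe_injective h2
        simp [h3]
      simp only [h1]
      simp
end

section
/- Let (G, 𝒯) be a metrisable topological group with a left-invariant compatible distance d_L, and define d_u(f,g) = sup_h d_L(fh, gh). Then (G, 𝒯, d_u) is a completely regular topometric space: d_u is lower semi-continuous with respect to 𝒯, the d_u-topology refines 𝒯, and the continuous 1-Lipschitz functions (G, 𝒯, d_u) → ℂ separate points from closed sets and satisfy d_u(f,g) = sup over such functions θ of |θ(f) − θ(g)|. -/
open scoped ENNReal NNReal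
open Set

/-- a metrisable topological group with a left-invariant compatible
distance `dL`, equipped with the uniform distance `d_u(f,g) = sup_h dL (f*h) (g*h)`,
is a completely regular topometric space. -/
theorem group_uniform_distance_completelyRegular {G : Type*} [Group G]
    [TopologicalSpace G] [IsTopologicalGroup G] (dL : G → G → ℝ)
    (h_self : ∀ x : G, dL x x = 0)
    (h_eq : ∀ x y : G, dL x y = 0 → x = y)
    (h_symm : ∀ x y : G, dL x y = dL y x)
    (h_tri : ∀ x y z : G, dL x z ≤ dL x y + dL y z)
    (h_inv : ∀ h x y : G, dL (h * x) (h * y) = dL x y)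
    (h_compat : ∀ U : Set G, IsOpen U ↔ ∀ x ∈ U, ∃ ε > (0 : ℝ), ∀ y, dL x y < ε → y ∈ U) :
    ∃ T : TopometricOn G,
      (∀ f g : G, T.d f g = ⨆ h : G, ENNReal.ofReal (dL (f * h) (g * h))) ∧
      T.IsCompletelyRegular := by
  classical
  -- basic facts about dL
  have nonneg : ∀ x y : G, 0 ≤ dL x y := by
    intro x y
    have h1 := h_tri x y x
    have h2 := h_symm y x
    have h3 := h_self x
    linarith
  have lip1 : ∀ x a b : G, |dL x a - dL x b| ≤ dL a b := by
    intro x a b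
    rw [abs_sub_le_iff]
    constructor
    · have := h_tri x b a; have := h_symm b a; linarith
    · have := h_tri x a b; linarith
  -- open balls
  have ball_open : ∀ (x : G) (ε : ℝ), IsOpen {y | dL x y < ε} := by
    intro x ε
    rw [h_compat]
    intro y hy
    refine ⟨ε - dL x y, by simpa using hy, fun z hz => ?_⟩
    have := h_tri x y z
    simp only [mem_setOf_eq]
    linarith [hz]
  have ball_nhds : ∀ (x : G) (ε : ℝ), 0 < ε → {y | dL x y < ε} ∈ nhds x := by
    intro x ε hε
    exact (ball_open x ε).mem_nhds (by simpa [h_self] using hε)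
  -- Lipschitz (w.r.t. dL) real functions are continuous
  have cont_of_lip : ∀ f : G → ℝ, (∀ a b, |f a - f b| ≤ dL a b) → Continuous f := by
    intro f hf
    rw [continuous_iff_continuousAt]
    intro x
    rw [ContinuousAt, Metric.tendsto_nhds]
    intro ε hε
    filter_upwards [ball_nhds x ε hε] with a ha
    rw [Real.dist_eq]
    calc |f a - f x| ≤ dL a x := hf a x
      _ = dL x a := h_symm a x
      _ < ε := ha
  -- dL is jointly continuous
  have cont2 : Continuous fun p : G × G => dL p.1 p.2 := by
    rw [continuous_iff_continuousAt]
    rintro ⟨x, y⟩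
    rw [ContinuousAt, Metric.tendsto_nhds]
    intro ε hε
    have hmem : {a | dL x a < ε / 2} ×ˢ {b | dL y b < ε / 2} ∈ nhds (x, y) :=
      prod_mem_nhds (ball_nhds x _ (by linarith)) (ball_nhds y _ (by linarith))
    filter_upwards [hmem] with p hp
    obtain ⟨h1, h2⟩ := hp
    rw [Real.dist_eq]
    have e1 : |dL p.1 p.2 - dL p.1 y| ≤ dL p.2 y := lip1 p.1 p.2 y
    have e2 : |dL p.1 y - dL x y| ≤ dL p.1 x := by
      have := lip1 y p.1 x
      rw [h_symm y p.1, h_symm y x] at this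
      exact this
    have : |dL p.1 p.2 - dL x y| ≤ dL p.2 y + dL p.1 x := by
      calc |dL p.1 p.2 - dL x y| ≤ |dL p.1 p.2 - dL p.1 y| + |dL p.1 y - dL x y| :=
            abs_sub_le _ _ _
        _ ≤ dL p.2 y + dL p.1 x := add_le_add e1 e2
    have hy2 : dL p.2 y < ε / 2 := by rw [h_symm]; exact h2
    have hx2 : dL p.1 x < ε / 2 := by rw [h_symm]; exact h1
    calc |dL p.1 p.2 - dL x y| ≤ dL p.2 y + dL p.1 x := this
      _ < ε := by linarith
  -- the uniform distance
  set du : G → G → ℝ≥0∞ := fun f g => ⨆ h : G, ENNReal.ofReal (dL (f * h) (g * h)) with hdu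
  have du_ge : ∀ (a b h : G), ENNReal.ofReal (dL (a * h) (b * h)) ≤ du a b :=
    fun a b h => le_iSup (fun h : G => ENNReal.ofReal (dL (a * h) (b * h))) h
  have du1 : ∀ a b : G, ENNReal.ofReal (dL a b) ≤ du a b := by
    intro a b
    have := du_ge a b 1
    simpa using this
  -- helper: a dL-Lipschitz real function gives a valid ℂ test function
  have lip_to_c : ∀ g : G → ℝ, (∀ a b, |g a - g b| ≤ dL a b) →
      ∀ a b, edist ((g a : ℂ)) ((g b : ℂ)) ≤ du a b := by
    intro g hg a b
    rw [Complex.isometry_ofReal.edist_eq, edist_dist, Real.dist_eq]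
    exact le_trans (ENNReal.ofReal_le_ofReal (hg a b)) (du1 a b)
  refine ⟨{ d := du
            d_self := by intro x; simp [hdu, h_self]
            eq_of_d_eq_zero := by
              intro x y h0
              have h1 : ENNReal.ofReal (dL x y) = 0 := le_antisymm (h0 ▸ du1 x y) bot_le
              have h2 : dL x y ≤ 0 := ENNReal.ofReal_eq_zero.mp h1
              exact h_eq x y (le_antisymm h2 (nonneg x y))
            d_symm := by
              intro x y
              simp only [hdu]
              exact iSup_congr fun h => by rw [h_symm]
            d_triangle := by
              intro x y z
              refine iSup_le fun h => ?_
              calc ENNReal.ofReal (dL (x * h) (z * h))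
                  ≤ ENNReal.ofReal (dL (x * h) (y * h) + dL (y * h) (z * h)) :=
                    ENNReal.ofReal_le_ofReal (h_tri _ _ _)
                _ ≤ ENNReal.ofReal (dL (x * h) (y * h)) + ENNReal.ofReal (dL (y * h) (z * h)) :=
                    ENNReal.ofReal_add_le
                _ ≤ du x y + du y z := add_le_add (du_ge x y h) (du_ge y z h)
            lsc := by
              apply lowerSemicontinuous_iSup
              intro h
              have : Continuous fun p : G × G => ENNReal.ofReal (dL (p.1 * h) (p.2 * h)) := by
                apply ENNReal.continuous_ofReal.comp
                exact cont2.comp (((continuous_fst.mul continuous_const)).prodMk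
                  ((continuous_snd.mul continuous_const)))
              exact this.lowerSemicontinuous
            refines := by
              intro U hU x hx
              obtain ⟨ε, hε, hb⟩ := (h_compat U).1 hU x hx
              refine ⟨ENNReal.ofReal ε, ENNReal.ofReal_pos.2 hε, fun y hy => ?_⟩
              have : ENNReal.ofReal (dL x y) < ENNReal.ofReal ε := lt_of_le_of_lt (du1 x y) hy
              exact hb y ((ENNReal.ofReal_lt_ofReal_iff hε).1 this) }, fun f g => rfl, ?_, ?_⟩
  · -- separation of points from closed sets
    intro F hF x hx
    obtain ⟨ε, hε, hb⟩ := (h_compat Fᶜ).1 hF.isOpen_compl x hx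
    set g : G → ℝ := fun a => max 0 (ε - dL x a) with hg
    have glip : ∀ a b, |g a - g b| ≤ dL a b := by
      intro a b
      calc |g a - g b| = |max (ε - dL x a) 0 - max (ε - dL x b) 0| := by
            rw [hg]; simp only [max_comm]
        _ ≤ |(ε - dL x a) - (ε - dL x b)| := abs_max_sub_max_le_abs _ _ _
        _ = |dL x b - dL x a| := by ring_nf
        _ ≤ dL b a := lip1 x b a
        _ = dL a b := h_symm b a
    refine ⟨fun a => (g a : ℂ), Complex.continuous_ofReal.comp (cont_of_lip g glip),
      lip_to_c g glip, 0, ?_, ?_⟩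
    · intro y hy
      have h2 : ε - dL x y ≤ 0 := by
        by_contra hc
        push_neg at hc
        exact hb y (by linarith) hy
      have hgy : g y = 0 := max_eq_left h2
      simp [hgy]
    · have hgx : g x = ε := by simp [hg, h_self, le_of_lt hε]
      simp only [hgx, ne_eq, Complex.ofReal_eq_zero]
      exact ne_of_gt hε
  · -- the distance is the sup over Lipschitz continuous functions
    intro x y
    apply le_antisymm
    · refine iSup_le fun h => ?_
      set θ : G → ℝ := fun a => dL (a * h) (x * h) with hθ
      have θlipc : ∀ a b, edist ((θ a : ℂ)) ((θ b : ℂ)) ≤ du a b := by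
        intro a b
        rw [Complex.isometry_ofReal.edist_eq, edist_dist, Real.dist_eq]
        have : |θ a - θ b| ≤ dL (a * h) (b * h) := by
          have h0 := lip1 (x * h) (a * h) (b * h)
          simp only [hθ]
          rw [h_symm (a * h) (x * h), h_symm (b * h) (x * h)]
          exact h0
        exact le_trans (ENNReal.ofReal_le_ofReal this) (du_ge a b h)
      have θcont : Continuous fun a => ((θ a : ℝ) : ℂ) := by
        apply Complex.continuous_ofReal.comp
        have c1 : Continuous fun b : G => dL b (x * h) := by
          apply cont_of_lip
          intro a b
          have := lip1 (x * h) a b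
          rw [h_symm a (x * h), h_symm b (x * h)]
          exact this
        exact c1.comp (continuous_mul_right h)
      refine le_trans ?_
        (le_iSup (fun f : {f : G → ℂ // Continuous f ∧ ∀ a b, edist (f a) (f b) ≤ du a b} =>
          edist (f.1 x) (f.1 y)) ⟨fun a => (θ a : ℂ), θcont, θlipc⟩)
      rw [Complex.isometry_ofReal.edist_eq, edist_dist, Real.dist_eq]
      apply ENNReal.ofReal_le_ofReal
      have : θ x = 0 := by simp [hθ, h_self]
      rw [this]
      have : θ y = dL (x * h) (y * h) := by rw [hθ, h_symm]
      rw [this]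
      rw [abs_sub_comm, sub_zero, abs_of_nonneg (nonneg _ _)]
    · exact iSup_le fun f => f.2.2 x y
end

section
/- Let X be a completely regular topometric space satisfying: for every open U ⊆ X and r > 0, the metric closure of U is contained in the interior of B(U,r) = {x : d(x,U) < r}. Let X₀ ⊆ X be metrically dense. Then every continuous 1-Lipschitz function f : X₀ → ℂ extends to a continuous 1-Lipschitz function on X. -/
open scoped ENNReal NNReal
open Set

private lemma TopometricOn.exists_of_ptD_lt {X : Type*} [TopologicalSpace X]
    (T : TopometricOn X) {x : X} {F : Set X} {η : ℝ≥0∞} (h : T.ptD x F < η) :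
    ∃ z ∈ F, T.d x z < η := by
  simpa [TopometricOn.ptD, iInf_lt_iff] using h

/-- in a completely regular topometric space satisfying condition (∗∗)
(the metric closure of any open `U` is contained in the interior of `B(U, r)`),
every continuous `1`-Lipschitz function on a metrically dense subset extends to a
continuous `1`-Lipschitz function on the whole space. -/
theorem extend_lipschitz_of_metrically_dense {X : Type*} [TopologicalSpace X]
    (T : TopometricOn X) (hT : T.IsCompletelyRegular)
    (hss : ∀ U : Set X, IsOpen U → ∀ r : ℝ≥0∞, 0 < r →
      {x | T.ptD x U = 0} ⊆ interior {x | T.ptD x U < r})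
    (X₀ : Set X) (hdense : ∀ x : X, T.ptD x X₀ = 0)
    (f : X₀ → ℂ) (hfc : Continuous f)
    (hfl : ∀ a b : X₀, edist (f a) (f b) ≤ T.d a b) :
    ∃ g : X → ℂ, Continuous g ∧ (∀ a b : X, edist (g a) (g b) ≤ T.d a b) ∧
      ∀ x : X₀, g x = f x := by
  classical
  have hdlt : ∀ (x : X) (η : ℝ≥0∞), 0 < η → ∃ z ∈ X₀, T.d x z < η := by
    intro x η hη
    exact T.exists_of_ptD_lt (by rw [hdense]; exact hη)
  set r : ℕ → ℝ≥0∞ := fun n => 2⁻¹ ^ n with hr_def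
  have hrpos : ∀ n, 0 < r n := fun n =>
    ENNReal.pow_pos (by simp [ENNReal.inv_pos]) n
  have hrlim : Filter.Tendsto r Filter.atTop (nhds 0) :=
    ENNReal.tendsto_pow_atTop_nhds_zero_of_lt_one (by
      simpa using ENNReal.inv_lt_one.mpr (by norm_num : (1:ℝ≥0∞) < 2))
  choose z hz hzd using fun (x : X) (n : ℕ) => hdlt x (r n) (hrpos n)
  set u : X → ℕ → ℂ := fun x n => f ⟨z x n, hz x n⟩ with hu_def
  have hcauchy : ∀ x, CauchySeq (u x) := by
    intro x
    rw [EMetric.cauchySeq_iff]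
    intro ε hε
    have h2 : (0:ℝ≥0∞) < ε / 2 := ENNReal.half_pos (ne_of_gt hε)
    obtain ⟨N, hN⟩ := Filter.eventually_atTop.mp (hrlim.eventually (Iio_mem_nhds h2))
    refine ⟨N, fun m hm n hn => ?_⟩
    calc edist (u x m) (u x n) ≤ T.d (z x m) (z x n) := hfl _ _
      _ ≤ T.d (z x m) x + T.d x (z x n) := T.d_triangle _ _ _
      _ = T.d x (z x m) + T.d x (z x n) := by rw [T.d_symm (z x m) x]
      _ < r m + r n := ENNReal.add_lt_add (hzd x m) (hzd x n)
      _ < ε / 2 + ε / 2 := ENNReal.add_lt_add (hN m hm) (hN n hn)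
      _ = ε := ENNReal.add_halves ε
  choose g hg using fun x => cauchySeq_tendsto_of_complete (hcauchy x)
  have hkey : ∀ (x : X) (w : X₀), edist (g x) (f w) ≤ T.d x ↑w := by
    intro x w
    have h1 : Filter.Tendsto (fun n => edist (u x n) (f w)) Filter.atTop
        (nhds (edist (g x) (f w))) := (hg x).edist tendsto_const_nhds
    have h2 : Filter.Tendsto (fun n => r n + T.d x ↑w) Filter.atTop
        (nhds (0 + T.d x ↑w)) := hrlim.add tendsto_const_nhds
    rw [zero_add] at h2
    refine le_of_tendsto_of_tendsto' h1 h2 fun n => ?_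
    calc edist (u x n) (f w) ≤ T.d (z x n) ↑w := hfl _ _
      _ ≤ T.d (z x n) x + T.d x ↑w := T.d_triangle _ _ _
      _ = T.d x (z x n) + T.d x ↑w := by rw [T.d_symm (z x n) x]
      _ ≤ r n + T.d x ↑w := add_le_add (hzd x n).le le_rfl
  have hext : ∀ x : X₀, g ↑x = f x := by
    intro x
    have h := hkey ↑x x
    rw [T.d_self] at h
    exact edist_le_zero.mp h
  have hlip : ∀ a b : X, edist (g a) (g b) ≤ T.d a b := by
    intro a b
    have h1 : Filter.Tendsto (fun n => edist (g a) (u b n)) Filter.atTop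
        (nhds (edist (g a) (g b))) := tendsto_const_nhds.edist (hg b)
    have h2 : Filter.Tendsto (fun n => T.d a b + r n) Filter.atTop
        (nhds (T.d a b + 0)) := tendsto_const_nhds.add hrlim
    rw [add_zero] at h2
    refine le_of_tendsto_of_tendsto' h1 h2 fun n => ?_
    calc edist (g a) (u b n) ≤ T.d a (z b n) := hkey a ⟨z b n, hz b n⟩
      _ ≤ T.d a b + T.d b (z b n) := T.d_triangle _ _ _
      _ ≤ T.d a b + r n := add_le_add le_rfl (hzd b n).le
  refine ⟨g, ?_, hlip, hext⟩
  rw [continuous_iff_continuousAt]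
  intro x
  have : Filter.Tendsto g (nhds x) (nhds (g x)) := by
    rw [EMetric.tendsto_nhds]
    intro ε hε
    obtain ⟨δ, hδ0, hδtop, hδε⟩ : ∃ δ : ℝ≥0∞, 0 < δ ∧ δ ≠ ∞ ∧ δ * 5 ≤ ε := by
      refine ⟨min (ε / 5) 1, lt_min (ENNReal.div_pos (ne_of_gt hε) (by norm_num))
        one_pos, ne_top_of_le_ne_top ENNReal.one_ne_top (min_le_right _ _), ?_⟩
      calc min (ε / 5) 1 * 5 ≤ ε / 5 * 5 := mul_le_mul_left (min_le_left _ _) 5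
        _ = 5 * (ε / 5) := mul_comm _ _
        _ ≤ ε := ENNReal.mul_div_le
    have hO : ∀ w : X₀, ∃ O : Set X, IsOpen O ∧ ↑w ∈ O ∧
        ∀ v : X₀, ↑v ∈ O → edist (f v) (f w) < δ := by
      intro w
      have hball : {v : X₀ | edist (f v) (f w) < δ} ∈ nhds w := by
        have h1 : EMetric.ball (f w) δ ∈ nhds (f w) := EMetric.ball_mem_nhds _ hδ0
        exact hfc.continuousAt.preimage_mem_nhds h1
      obtain ⟨V, hV, hVsub⟩ := (mem_nhds_subtype _ _ _).mp hball
      obtain ⟨O, hOV, hOopen, hwO⟩ := mem_nhds_iff.mp hV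
      exact ⟨O, hOopen, hwO, fun v hv => hVsub (hOV hv)⟩
    choose O hOopen hOmem hOf using hO
    set U : Set X := ⋃ (w : X₀) (_ : T.d x ↑w < δ), O w with hU_def
    have hUopen : IsOpen U := isOpen_iUnion fun w => isOpen_iUnion fun _ => hOopen w
    have hUd : T.ptD x U = 0 := by
      refine le_antisymm (ENNReal.le_of_forall_pos_le_add fun ε' hε' _ => ?_)
        zero_le
      obtain ⟨z₀, hz₀, hdz₀⟩ := hdlt x (min δ ε')
        (lt_min hδ0 (by exact_mod_cast hε'))
      have hz₀U : z₀ ∈ U := by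
        refine mem_iUnion.mpr ⟨⟨z₀, hz₀⟩, mem_iUnion.mpr
          ⟨hdz₀.trans_le (min_le_left _ _), ?_⟩⟩
        exact hOmem ⟨z₀, hz₀⟩
      calc T.ptD x U ≤ T.d x z₀ := iInf₂_le z₀ hz₀U
        _ ≤ (ε' : ℝ≥0∞) := (hdz₀.trans_le (min_le_right _ _)).le
        _ = 0 + ε' := (zero_add _).symm
    have hxN : x ∈ interior {y | T.ptD y U < δ} := hss U hUopen δ hδ0 hUd
    filter_upwards [mem_interior_iff_mem_nhds.mp hxN] with y hy
    obtain ⟨v, hvU, hyv⟩ := T.exists_of_ptD_lt hy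
    obtain ⟨w, hvO⟩ := mem_iUnion.mp hvU
    obtain ⟨hw, hvO⟩ := mem_iUnion.mp hvO
    obtain ⟨η₀, hη₀, hball⟩ := T.refines (O w) (hOopen w) v hvO
    obtain ⟨v', hv'X₀, hvv'⟩ := hdlt v (min η₀ δ) (lt_min hη₀ hδ0)
    have hv'O : (v' : X) ∈ O w := hball v' (hvv'.trans_le (min_le_left _ _))
    have hfv' : edist (f ⟨v', hv'X₀⟩) (f w) < δ := hOf w ⟨v', hv'X₀⟩ hv'O
    have h1 : edist (g y) (f ⟨v', hv'X₀⟩) < δ + δ := by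
      calc edist (g y) (f ⟨v', hv'X₀⟩) ≤ T.d y v' := hkey y ⟨v', hv'X₀⟩
        _ ≤ T.d y v + T.d v v' := T.d_triangle _ _ _
        _ < δ + δ := ENNReal.add_lt_add hyv (hvv'.trans_le (min_le_right _ _))
    have h3 : edist (f w) (g x) < δ := by
      rw [edist_comm]
      exact (hkey x w).trans_lt hw
    calc edist (g y) (g x)
        ≤ edist (g y) (f ⟨v', hv'X₀⟩) + edist (f ⟨v', hv'X₀⟩) (f w)
          + edist (f w) (g x) := edist_triangle4 _ _ _ _
      _ < (δ + δ) + δ + δ := ENNReal.add_lt_add (ENNReal.add_lt_add h1 hfv') h3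
      _ = δ * 4 := by ring
      _ ≤ δ * 5 := mul_le_mul_right (by norm_num) δ
      _ ≤ ε := hδε
  exact this
end
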